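/- arXiv:2201.09304 — 6 statements merged into one kernel-verified Lean document; each statement's English description precedes it below -/
import Mathlib

section
/- Let (V, φ) be a Frobenius space over E = k((π)) with maximal integral model V_O. Let T be a φ-stable O_E-lattice in V of rank r, and let (e_1 ≤ … ≤ e_r) be the valuations of the elementary divisors of the inclusion φ(σ*T) ⊆ T. If s is a non-negative integer with e_r ≤ s(q−1), then V_O ⊆ π^{−s}·T. -/
open scoped Multiplicative nonZeroDivisors WithZero

section Aux
variable {K : Type*} [Field K]

lemma aux_mem_range_iff (a : LaurentSeries K) :
    a ∈ Set.range (algebraMap (PowerSeries K) (LaurentSeries K)) ↔ Valued.v a ≤ (1 : ℤᵐ⁰) := by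
  rw [LaurentSeries.val_le_one_iff_eq_coe]
  constructor
  · rintro ⟨F, rfl⟩; exact ⟨F, rfl⟩
  · rintro ⟨F, rfl⟩; exact ⟨F, rfl⟩

lemma aux_val_X :
    Valued.v ((algebraMap (PowerSeries K) (LaurentSeries K)) PowerSeries.X)
      = WithZero.exp (-1 : ℤ) := by
  have := LaurentSeries.valuation_X_pow (K := K) 1
  simpa using this

lemma aux_exists_pow_mul_integral (a : LaurentSeries K) :
    ∃ m : ℕ, Valued.v ((algebraMap (PowerSeries K) (LaurentSeries K) PowerSeries.X) ^ m * a)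
      ≤ (1 : ℤᵐ⁰) := by
  rcases eq_or_ne a 0 with rfl | ha
  · exact ⟨0, by simp⟩
  · have hv : (Valued.v a : ℤᵐ⁰) ≠ 0 := (Valuation.ne_zero_iff _).mpr ha
    set t := WithZero.log (Valued.v a) with ht
    have he : Valued.v a = WithZero.exp t := (WithZero.exp_log hv).symm
    refine ⟨t.toNat, ?_⟩
    rw [map_mul, map_pow, aux_val_X, he, ← WithZero.exp_nsmul, ← WithZero.exp_add,
      ← WithZero.exp_zero (M := ℤ), WithZero.exp_le_exp]
    simp only [nsmul_eq_mul, smul_eq_mul]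
    have : t ≤ (t.toNat : ℤ) := Int.self_le_toNat _
    linarith

lemma aux_scalar_key {q : ℕ} (hq : 0 < q) (a : LaurentSeries K) (c d : ℕ)
    (hcd : c + 1 ≤ q * d + q)
    (h : Valued.v ((algebraMap (PowerSeries K) (LaurentSeries K) PowerSeries.X) ^ c * a ^ q)
      ≤ (1 : ℤᵐ⁰)) :
    Valued.v ((algebraMap (PowerSeries K) (LaurentSeries K) PowerSeries.X) ^ d * a)
      ≤ (1 : ℤᵐ⁰) := by
  rcases eq_or_ne a 0 with rfl | ha
  · simp
  · have hv : (Valued.v a : ℤᵐ⁰) ≠ 0 := (Valuation.ne_zero_iff _).mpr ha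
    set t := WithZero.log (Valued.v a) with ht
    have he : Valued.v a = WithZero.exp t := (WithZero.exp_log hv).symm
    rw [map_mul, map_pow, map_pow, aux_val_X, he, ← WithZero.exp_nsmul, ← WithZero.exp_nsmul,
      ← WithZero.exp_add, ← WithZero.exp_zero (M := ℤ), WithZero.exp_le_exp] at h
    rw [map_mul, map_pow, aux_val_X, he, ← WithZero.exp_nsmul, ← WithZero.exp_add,
      ← WithZero.exp_zero (M := ℤ), WithZero.exp_le_exp]
    simp only [nsmul_eq_mul, smul_eq_mul] at h ⊢
    have hqt : (q : ℤ) * t ≤ c := by linarith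
    have htd : t ≤ (d : ℤ) := by
      by_contra hlt
      push_neg at hlt
      have h1 : (d : ℤ) + 1 ≤ t := by omega
      have h2 : (q : ℤ) * (d + 1) ≤ q * t :=
        mul_le_mul_of_nonneg_left h1 (by positivity)
      have hc : (c : ℤ) + 1 ≤ q * d + q := by exact_mod_cast hcd
      linarith
    linarith

end Aux


/-!
STATEMENT 4: If `T` is a `φ`-stable `O_E`-lattice in a Frobenius space `(V, φ)` over
`E = k((π))` whose elementary divisors relative to `φ(σ*T) ⊆ T` have valuations
`e_1, …, e_r ≤ s(q-1)`, then the maximal integral model `V_O` satisfies `V_O ⊆ π^{-s}·T`,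
i.e. `π^s · V_O ⊆ T`.
-/

def IsLatticeIn {k : Type*} [Field k] {V : Type*} [AddCommGroup V]
    [Module (LaurentSeries k) V] [Module (PowerSeries k) V]
    (L : Submodule (PowerSeries k) V) : Prop :=
  L.FG ∧ Submodule.span (LaurentSeries k) (L : Set V) = ⊤

def IsStable {k : Type*} [Field k] {V : Type*} [AddCommGroup V]
    [Module (LaurentSeries k) V] [Module (PowerSeries k) V]
    {σ : LaurentSeries k →+* LaurentSeries k} (φ : V →ₛₗ[σ] V)
    (L : Submodule (PowerSeries k) V) : Prop :=
  ∀ x ∈ L, φ x ∈ L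

/-- The `O_E`-submodule `φ(σ*L)`. -/
noncomputable def phiSpan {k : Type*} [Field k] {V : Type*} [AddCommGroup V]
    [Module (LaurentSeries k) V] [Module (PowerSeries k) V]
    {σ : LaurentSeries k →+* LaurentSeries k} (φ : V →ₛₗ[σ] V)
    (L : Submodule (PowerSeries k) V) : Submodule (PowerSeries k) V :=
  Submodule.span (PowerSeries k) (⇑φ '' (L : Set V))

theorem maximal_model_le_of_range_le
    {k : Type*} [Field k] [PerfectField k] {p q e₀ : ℕ} (hp : p.Prime) [CharP k p]
    (he₀ : 0 < e₀) (hq : q = p ^ e₀)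
    {σ : LaurentSeries k →+* LaurentSeries k} (hσ : ∀ x, σ x = x ^ q)
    {V : Type*} [AddCommGroup V] [Module (LaurentSeries k) V]
    [Module (PowerSeries k) V] [IsScalarTower (PowerSeries k) (LaurentSeries k) V]
    [FiniteDimensional (LaurentSeries k) V]
    (φ : V →ₛₗ[σ] V) (hφ : Function.Bijective φ)
    -- `VO` is the maximal `φ`-stable `O_E`-lattice in `V`
    (VO : Submodule (PowerSeries k) V)
    (hVO : IsLatticeIn VO ∧ IsStable φ VO)
    (hVOmax : ∀ L : Submodule (PowerSeries k) V, IsLatticeIn L ∧ IsStable φ L → L ≤ VO)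
    -- `T` is a `φ`-stable lattice …
    (T : Submodule (PowerSeries k) V) (hT : IsLatticeIn T) (hTstab : IsStable φ T)
    -- … with elementary divisors `π^{ed i}` relative to `φ(σ*T) ⊆ T` (Smith normal form:
    -- there is an `O_E`-basis `b` of `T` with `φ(σ*T) = ⊕ᵢ π^{ed i}·O_E·(b i)`) …
    {ι : Type*} [Fintype ι] (b : Module.Basis ι (PowerSeries k) ↥T) (ed : ι → ℕ)
    (hsmith : phiSpan φ T =
      Submodule.span (PowerSeries k)
        (Set.range fun i => (PowerSeries.X : PowerSeries k) ^ ed i • ((b i : ↥T) : V)))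
    -- … all of valuation at most `s(q-1)`.
    (s : ℕ) (hrange : ∀ i, ed i ≤ s * (q - 1)) :
    ∀ x ∈ VO, (PowerSeries.X : PowerSeries k) ^ s • x ∈ T := by
  classical
  obtain ⟨hVOlat, hVOstab⟩ := hVO
  have hq2 : 2 ≤ q := by rw [hq]; exact Nat.one_lt_pow (by omega) hp.one_lt
  have hinj : Function.Injective (algebraMap (PowerSeries k) (LaurentSeries k)) :=
    IsFractionRing.injective _ _
  haveI : NoZeroSMulDivisors (PowerSeries k) (LaurentSeries k) :=
    ⟨fun {c x} h => by
      rw [Algebra.smul_def] at h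
      rcases mul_eq_zero.mp h with h | h
      · exact Or.inl ((map_eq_zero_iff _ hinj).mp h)
      · exact Or.inr h⟩
  -- `bV` : the images of `b` form an `E`-basis of `V`
  have hbT : ∀ i, ((b i : ↥T) : V) ∈ T := fun i => (b i).2
  have liO : LinearIndependent (PowerSeries k) (fun i => ((b i : ↥T) : V)) :=
    b.linearIndependent.map' T.subtype (Submodule.ker_subtype T)
  have liE : LinearIndependent (LaurentSeries k) (fun i => ((b i : ↥T) : V)) :=
    liO.localization (LaurentSeries k) (PowerSeries k)⁰
  have hspanO : Submodule.span (PowerSeries k) (Set.range fun i => ((b i : ↥T) : V)) = T := by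
    have h := congrArg (Submodule.map T.subtype) b.span_eq
    rwa [Submodule.map_span, Submodule.map_top, Submodule.range_subtype,
      ← Set.range_comp] at h
  have hspanE : ⊤ ≤ Submodule.span (LaurentSeries k) (Set.range fun i => ((b i : ↥T) : V)) := by
    rw [← hT.2]
    refine Submodule.span_le.mpr fun x hx => ?_
    have hx' : x ∈ Submodule.span (PowerSeries k) (Set.range fun i => ((b i : ↥T) : V)) := by
      rw [hspanO]; exact hx
    exact Submodule.span_subset_span (PowerSeries k) (LaurentSeries k) _ hx'
  let bV : Module.Basis ι (LaurentSeries k) V := Module.Basis.mk liE hspanE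
  have hbV : ∀ i, bV i = ((b i : ↥T) : V) := fun i => by simp [bV]
  -- φ on O-scalars
  have hφO : ∀ (c : PowerSeries k) (x : V), φ (c • x) = (c ^ q) • φ x := by
    intro c x
    rw [← algebraMap_smul (LaurentSeries k) c x, LinearMap.map_smulₛₗ, hσ, ← map_pow,
      algebraMap_smul]
  set M := phiSpan φ T with hMdef
  set φb : ι → V := fun i => φ ((b i : ↥T) : V) with hφbdef
  have hφbM : ∀ i, φb i ∈ M := fun i => Submodule.subset_span ⟨_, hbT i, rfl⟩
  -- decomposition of elements of T
  have hTrep : ∀ x (hx : x ∈ T), x = ∑ i, (b.repr ⟨x, hx⟩ i) • ((b i : ↥T) : V) := by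
    intro x hx
    have h := congrArg (T.subtype) (b.sum_repr ⟨x, hx⟩)
    rw [map_sum] at h
    simpa using h.symm
  have hMspan : Submodule.span (PowerSeries k) (Set.range φb) = M := by
    apply le_antisymm
    · exact Submodule.span_le.mpr (by rintro _ ⟨i, rfl⟩; exact hφbM i)
    · rw [hMdef, phiSpan]
      refine Submodule.span_le.mpr ?_
      rintro _ ⟨t, ht, rfl⟩
      rw [hTrep t ht, map_sum]
      refine Submodule.sum_mem _ fun i _ => ?_
      rw [hφO]
      exact Submodule.smul_mem _ _ (Submodule.subset_span ⟨i, rfl⟩)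
  have hXedM : ∀ i, (PowerSeries.X : PowerSeries k) ^ ed i • ((b i : ↥T) : V) ∈ M := by
    intro i; rw [hsmith]; exact Submodule.subset_span ⟨i, rfl⟩
  have hET : ∀ x ∈ T, (PowerSeries.X : PowerSeries k) ^ (s * (q - 1)) • x ∈ M := by
    intro x hx
    rw [hTrep x hx, Finset.smul_sum]
    refine Submodule.sum_mem _ fun i _ => ?_
    rw [smul_comm]
    refine Submodule.smul_mem _ _ ?_
    have hsplit : (PowerSeries.X : PowerSeries k) ^ (s * (q - 1)) • ((b i : ↥T) : V)
        = (PowerSeries.X : PowerSeries k) ^ (s * (q - 1) - ed i) •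
          ((PowerSeries.X : PowerSeries k) ^ ed i • ((b i : ↥T) : V)) := by
      rw [smul_smul, ← pow_add]
      congr 2
      have := hrange i
      omega
    rw [hsplit]
    exact Submodule.smul_mem _ _ (hXedM i)
  -- `φb` is an `E`-basis of `V`
  have hspanφb : ⊤ ≤ Submodule.span (LaurentSeries k) (Set.range φb) := by
    rw [← bV.span_eq]
    refine Submodule.span_le.mpr ?_
    rintro _ ⟨i, rfl⟩
    have h1 : (PowerSeries.X : PowerSeries k) ^ ed i • bV i ∈
        Submodule.span (LaurentSeries k) (Set.range φb) := by
      refine Submodule.span_subset_span (PowerSeries k) (LaurentSeries k) _ ?_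
      rw [hMspan, hbV]
      exact hXedM i
    have hπ0 : ((algebraMap (PowerSeries k) (LaurentSeries k)) PowerSeries.X) ^ ed i ≠ 0 :=
      pow_ne_zero _ (fun h0 => PowerSeries.X_ne_zero (hinj (by simpa using h0)))
    have heq : bV i = (((algebraMap (PowerSeries k) (LaurentSeries k)) PowerSeries.X) ^ ed i)⁻¹ •
        ((PowerSeries.X : PowerSeries k) ^ ed i • bV i) := by
      rw [← algebraMap_smul (LaurentSeries k) ((PowerSeries.X : PowerSeries k) ^ ed i) (bV i),
        map_pow, smul_smul, inv_mul_cancel₀ hπ0, one_smul]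
    rw [SetLike.mem_coe, heq]
    exact Submodule.smul_mem _ _ h1
  have hcard : Fintype.card ι = Module.finrank (LaurentSeries k) V :=
    (Module.finrank_eq_card_basis bV).symm
  let cb : Module.Basis ι (LaurentSeries k) V := basisOfTopLeSpanOfCardEqFinrank φb hspanφb hcard
  have hcb : ⇑cb = φb := coe_basisOfTopLeSpanOfCardEqFinrank _ _ _
  -- Key lemma
  have KL : ∀ n : ℕ, s + 1 ≤ n → ∀ y : V,
      (PowerSeries.X : PowerSeries k) ^ n • φ y ∈ T →
      (PowerSeries.X : PowerSeries k) ^ (n - 1) • y ∈ T := by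
    intro n hn y hy
    set a : ι → LaurentSeries k := fun i => bV.repr y i with ha
    have hyrep : y = ∑ i, a i • bV i := (bV.sum_repr y).symm
    have hφy : φ y = ∑ i, (a i ^ q) • φb i := by
      conv_lhs => rw [hyrep]
      rw [map_sum]
      refine Finset.sum_congr rfl fun i _ => ?_
      rw [LinearMap.map_smulₛₗ, hσ, hbV]
    have hmem : (PowerSeries.X : PowerSeries k) ^ (s * (q - 1) + n) • φ y ∈ M := by
      have h := hET _ hy
      rwa [smul_smul, ← pow_add] at h
    have hcoord : ∀ i,
        ((algebraMap (PowerSeries k) (LaurentSeries k)) PowerSeries.X) ^ (s * (q - 1) + n)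
          * a i ^ q ∈ Set.range (algebraMap (PowerSeries k) (LaurentSeries k)) := by
      intro i
      have hterm : ∀ j, (PowerSeries.X : PowerSeries k) ^ (s * (q - 1) + n) • ((a j ^ q) • φb j)
          = (((algebraMap (PowerSeries k) (LaurentSeries k)) PowerSeries.X) ^ (s * (q - 1) + n)
              * a j ^ q) • cb j := by
        intro j
        rw [hcb]
        rw [← algebraMap_smul (LaurentSeries k)
          ((PowerSeries.X : PowerSeries k) ^ (s * (q - 1) + n)), map_pow, smul_smul]
      have hrepr : cb.repr ((PowerSeries.X : PowerSeries k) ^ (s * (q - 1) + n) • φ y) i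
          = ((algebraMap (PowerSeries k) (LaurentSeries k)) PowerSeries.X) ^ (s * (q - 1) + n)
              * a i ^ q := by
        rw [hφy, Finset.smul_sum]
        simp_rw [hterm]
        rw [cb.repr_sum_self]
      have hmem' : (PowerSeries.X : PowerSeries k) ^ (s * (q - 1) + n) • φ y ∈
          Submodule.span (PowerSeries k) (Set.range ⇑cb) := by
        rw [hcb, hMspan]; exact hmem
      have h := (cb.mem_span_iff_repr_mem (PowerSeries k) _).mp hmem' i
      rwa [hrepr] at h
    have hineq : (s * (q - 1) + n) + 1 ≤ q * (n - 1) + q := by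
      rcases Nat.exists_eq_add_of_le hq2 with ⟨q', rfl⟩
      rcases Nat.exists_eq_add_of_le hn with ⟨n', rfl⟩
      have e1 : 2 + q' - 1 = 1 + q' := by omega
      have e2 : s + 1 + n' - 1 = s + n' := by omega
      rw [e1, e2]
      nlinarith
    have hkey : ∀ i,
        ((algebraMap (PowerSeries k) (LaurentSeries k)) PowerSeries.X) ^ (n - 1) * a i
          ∈ Set.range (algebraMap (PowerSeries k) (LaurentSeries k)) := by
      intro i
      rw [aux_mem_range_iff]
      exact aux_scalar_key (by omega) (a i) _ _ hineq ((aux_mem_range_iff _).mp (hcoord i))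
    choose c hc using hkey
    have hfin : (PowerSeries.X : PowerSeries k) ^ (n - 1) • y = ∑ i, c i • bV i := by
      conv_lhs => rw [hyrep]
      rw [Finset.smul_sum]
      refine Finset.sum_congr rfl fun i _ => ?_
      rw [← algebraMap_smul (LaurentSeries k) ((PowerSeries.X : PowerSeries k) ^ (n - 1)),
        map_pow, smul_smul, ← hc i, algebraMap_smul]
    rw [hfin]
    refine Submodule.sum_mem _ fun i _ => ?_
    refine T.smul_mem _ ?_
    rw [hbV]
    exact hbT i
  -- every element of V is bounded
  have hex : ∀ y : V, ∃ m : ℕ, (PowerSeries.X : PowerSeries k) ^ m • y ∈ T := by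
    intro y
    have hy : y ∈ Submodule.span (LaurentSeries k) (T : Set V) := hT.2 ▸ Submodule.mem_top
    induction hy using Submodule.span_induction with
    | mem x hx => exact ⟨0, by simpa using hx⟩
    | zero => exact ⟨0, by simp⟩
    | add x y' _ _ ihx ihy =>
        obtain ⟨m1, h1⟩ := ihx
        obtain ⟨m2, h2⟩ := ihy
        refine ⟨m1 + m2, ?_⟩
        rw [smul_add]
        refine Submodule.add_mem _ ?_ ?_
        · rw [add_comm m1 m2, pow_add, mul_smul]
          exact T.smul_mem _ h1
        · rw [pow_add, mul_smul]
          exact T.smul_mem _ h2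
    | smul a x _ ih =>
        obtain ⟨m, hm⟩ := ih
        obtain ⟨j, hj⟩ := aux_exists_pow_mul_integral a
        rw [← aux_mem_range_iff] at hj
        obtain ⟨c, hc⟩ := hj
        refine ⟨j + m, ?_⟩
        have heq : (PowerSeries.X : PowerSeries k) ^ (j + m) • (a • x)
            = c • ((PowerSeries.X : PowerSeries k) ^ m • x) := by
          rw [← algebraMap_smul (LaurentSeries k) ((PowerSeries.X : PowerSeries k) ^ (j + m))
            (a • x), map_pow, smul_smul,
            ← algebraMap_smul (LaurentSeries k) ((PowerSeries.X : PowerSeries k) ^ m) x,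
            map_pow, ← algebraMap_smul (LaurentSeries k) c, smul_smul]
          congr 1
          rw [hc, pow_add]
          ring
        rw [heq]
        exact T.smul_mem _ hm
  -- a uniform bound for VO
  obtain ⟨S, hS⟩ := hVOlat.1
  choose mfun hmfun using hex
  set N : ℕ := S.sup mfun with hN
  have hVObd : ∀ y ∈ VO, (PowerSeries.X : PowerSeries k) ^ N • y ∈ T := by
    intro y hy
    rw [← hS] at hy
    induction hy using Submodule.span_induction with
    | mem x hx =>
        have hle : mfun x ≤ N := Finset.le_sup hx
        have heq : (PowerSeries.X : PowerSeries k) ^ N • x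
            = (PowerSeries.X : PowerSeries k) ^ (N - mfun x) •
              ((PowerSeries.X : PowerSeries k) ^ (mfun x) • x) := by
          rw [smul_smul, ← pow_add]
          congr 2
          omega
        rw [heq]
        exact T.smul_mem _ (hmfun x)
    | zero => simp
    | add x y' _ _ ihx ihy =>
        rw [smul_add]
        exact Submodule.add_mem _ ihx ihy
    | smul c x _ ih =>
        rw [smul_comm]
        exact T.smul_mem _ ih
  -- downward induction
  have step : ∀ d : ℕ, (∀ y ∈ VO, (PowerSeries.X : PowerSeries k) ^ (s + d + 1) • y ∈ T) →
      (∀ y ∈ VO, (PowerSeries.X : PowerSeries k) ^ (s + d) • y ∈ T) := by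
    intro d hd y hy
    have h1 : (PowerSeries.X : PowerSeries k) ^ (s + d + 1) • φ y ∈ T :=
      hd (φ y) (hVOstab y hy)
    have h2 := KL (s + d + 1) (by omega) y h1
    simpa using h2
  have down : ∀ d : ℕ, (∀ y ∈ VO, (PowerSeries.X : PowerSeries k) ^ (s + d) • y ∈ T) →
      ∀ y ∈ VO, (PowerSeries.X : PowerSeries k) ^ s • y ∈ T := by
    intro d
    induction d with
    | zero => intro h; simpa using h
    | succ d ih => intro h; exact ih (step d h)
  refine down N (fun y hy => ?_)
  have heq : (PowerSeries.X : PowerSeries k) ^ (s + N) • y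
      = (PowerSeries.X : PowerSeries k) ^ s • ((PowerSeries.X : PowerSeries k) ^ N • y) := by
    rw [smul_smul, ← pow_add]
  rw [heq]
  exact T.smul_mem _ (hVObd y hy)
end

section
/- Let k be a perfect field containing F_q, let W be a finite-dimensional k-vector space and let ψ : W → W be a q-semilinear map (ψ(cw) = c^q ψ(w)). Then W decomposes uniquely as a direct sum W = A ⊕ B of ψ-stable k-subspaces such that ψ restricted to A is bijective and ψ restricted to B is nilpotent. -/
open Function

/-!
STATEMENT 6: Semisimple–nilpotent decomposition: a finite-dimensional vector space `W` over a
perfect field `k ⊇ F_q` with a `q`-semilinear endomorphism `ψ` decomposes uniquely as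
`W = A ⊕ B` with `A`, `B` stable under `ψ`, `ψ` bijective on `A` and nilpotent on `B`.
-/

theorem semisimple_nilpotent_decomposition
    {k : Type*} [Field k] [PerfectField k] {p q e : ℕ} (hp : p.Prime) [CharP k p]
    (he : 0 < e) (hq : q = p ^ e)
    {σ : k →+* k} (hσ : ∀ x, σ x = x ^ q)
    {W : Type*} [AddCommGroup W] [Module k W] [FiniteDimensional k W]
    (ψ : W →ₛₗ[σ] W) :
    ∃! AB : Submodule k W × Submodule k W,
      IsCompl AB.1 AB.2 ∧
      Set.BijOn ψ (AB.1 : Set W) (AB.1 : Set W) ∧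
      Set.MapsTo ψ (AB.2 : Set W) (AB.2 : Set W) ∧
      ∃ n : ℕ, ∀ x ∈ AB.2, (⇑ψ)^[n] x = 0 := by
  classical
  haveI : Fact p.Prime := ⟨hp⟩
  set f : W → W := ⇑ψ with hf
  -- surjectivity of q^n-th power map
  have hpow : ∀ m : ℕ, Function.Surjective (fun x : k => x ^ p ^ m) := by
    intro m
    induction m with
    | zero => exact fun c => ⟨c, by simp⟩
    | succ m ih =>
      intro c
      obtain ⟨b, hb⟩ := surjective_frobenius k p c
      obtain ⟨a, ha⟩ := ih b
      exact ⟨a, by simp only [pow_succ, pow_mul, ha, ← hb, frobenius_def]⟩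
  have hqpow : ∀ n : ℕ, Function.Surjective (fun x : k => x ^ q ^ n) := by
    intro n c
    obtain ⟨a, ha⟩ := hpow (e * n) c
    have ha' : a ^ p ^ (e * n) = c := ha
    exact ⟨a, show a ^ q ^ n = c by rw [hq, ← pow_mul]; exact ha'⟩
  -- basic iterate facts
  have hadd : ∀ (n : ℕ) (x y : W), f^[n] (x + y) = f^[n] x + f^[n] y := by
    intro n
    induction n with
    | zero => simp
    | succ n ih => intro x y; simp only [iterate_succ_apply, hf, map_add ψ] at ih ⊢; exact ih _ _
  have hzero : ∀ n : ℕ, f^[n] (0 : W) = 0 := by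
    intro n; induction n with
    | zero => simp
    | succ n ih => simp only [iterate_succ_apply, hf, map_zero ψ] at ih ⊢; exact ih
  have hsub : ∀ (n : ℕ) (x y : W), f^[n] (x - y) = f^[n] x - f^[n] y := by
    intro n
    induction n with
    | zero => simp
    | succ n ih => intro x y; simp only [iterate_succ_apply, hf, map_sub ψ] at ih ⊢; exact ih _ _
  have hsmul : ∀ (n : ℕ) (c : k) (x : W), f^[n] (c • x) = c ^ q ^ n • f^[n] x := by
    intro n
    induction n with
    | zero => simp
    | succ n ih =>
      intro c x
      rw [iterate_succ_apply, hf, ψ.map_smulₛₗ, hσ, ← hf, ih, ← pow_mul, ← pow_succ', iterate_succ_apply]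
  -- kernels and ranges
  have K : ∀ n : ℕ, { S : Submodule k W // ∀ x, x ∈ S ↔ f^[n] x = 0 } := by
    intro n
    refine ⟨⟨⟨⟨{x | f^[n] x = 0}, ?_⟩, ?_⟩, ?_⟩, fun x => Iff.rfl⟩
    · intro a b ha hb
      simp only [Set.mem_setOf_eq] at *
      rw [hadd, ha, hb, add_zero]
    · exact hzero n
    · intro c x hx
      simp only [Set.mem_setOf_eq] at *
      rw [hsmul, hx, smul_zero]
  have R : ∀ n : ℕ, { S : Submodule k W // ∀ x, x ∈ S ↔ ∃ y, f^[n] y = x } := by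
    intro n
    refine ⟨⟨⟨⟨Set.range f^[n], ?_⟩, ?_⟩, ?_⟩, fun x => Iff.rfl⟩
    · rintro a b ⟨x, hx⟩ ⟨y, hy⟩
      exact ⟨x + y, by rw [hadd, hx, hy]⟩
    · exact ⟨0, hzero n⟩
    · rintro c x ⟨y, hy⟩
      obtain ⟨d, hd⟩ := hqpow n c
      have hd' : d ^ q ^ n = c := hd
      exact ⟨d • y, by rw [hsmul, hd', hy]⟩
  obtain ⟨K, memK⟩ : ∃ K : ℕ → Submodule k W, ∀ n x, x ∈ K n ↔ f^[n] x = 0 :=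
    ⟨fun n => (K n).1, fun n => (K n).2⟩
  obtain ⟨R, memR⟩ : ∃ R : ℕ → Submodule k W, ∀ n x, x ∈ R n ↔ ∃ y, f^[n] y = x :=
    ⟨fun n => (R n).1, fun n => (R n).2⟩
  have Kmono : Monotone K := by
    apply monotone_nat_of_le_succ
    intro n x hx
    rw [memK] at hx ⊢
    rw [iterate_succ_apply', hx, hf, map_zero]
  have Ranti : ∀ n m : ℕ, n ≤ m → R m ≤ R n := by
    have step : ∀ n, R (n + 1) ≤ R n := by
      intro n x hx
      rw [memR] at hx ⊢
      obtain ⟨y, hy⟩ := hx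
      exact ⟨f y, by rwa [← iterate_succ_apply]⟩
    intro n m h
    induction h with
    | refl => exact le_rfl
    | step h ih => exact le_trans (step _) ih
  -- stabilization
  obtain ⟨N₁, hN₁⟩ := monotone_stabilizes_iff_noetherian.mpr inferInstance ⟨K, Kmono⟩
  obtain ⟨N₂, hN₂⟩ := IsArtinian.monotone_stabilizes
    (⟨fun n => OrderDual.toDual (R n), fun a b h => Ranti a b h⟩ : ℕ →o (Submodule k W)ᵒᵈ)
  set N := max N₁ N₂ + 1 with hN
  have Kstab : ∀ m, N ≤ m → K m = K N := by
    intro m hm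
    exact (hN₁ m (le_trans (le_max_left _ _) (le_trans (Nat.le_succ _) hm))).symm.trans
      (hN₁ N (le_trans (le_max_left _ _) (Nat.le_succ _)))
  have Rstab : ∀ m, N ≤ m → R m = R N := by
    intro m hm
    have h1 := hN₂ N (le_trans (le_max_right _ _) (Nat.le_succ _))
    have h2 := hN₂ m (le_trans (le_max_right _ _) (le_trans (Nat.le_succ _) hm))
    exact h2.symm.trans h1
  set A := R N
  set B := K N
  -- disjointness
  have hdisj : Disjoint A B := by
    rw [Submodule.disjoint_def]
    intro x hxA hxB
    rw [memR] at hxA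
    obtain ⟨y, hy⟩ := hxA
    rw [memK] at hxB
    have hyK : y ∈ K (N + N) := by
      rw [memK, iterate_add_apply, hy]; exact hxB
    rw [Kstab (N + N) (Nat.le_add_right _ _)] at hyK
    rw [← hy]
    exact (memK N y).mp hyK
  have hcompl : IsCompl A B := by
    refine ⟨hdisj, codisjoint_iff.mpr ?_⟩
    rw [eq_top_iff]
    intro x _
    have hx : f^[N] x ∈ R (N + N) := by
      rw [Rstab (N + N) (Nat.le_add_right _ _)]
      exact (memR N _).mpr ⟨x, rfl⟩
    rw [memR] at hx
    obtain ⟨y, hy⟩ := hx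
    rw [iterate_add_apply] at hy
    have h1 : f^[N] y ∈ A := (memR N _).mpr ⟨y, rfl⟩
    have h2 : x - f^[N] y ∈ B := by
      rw [memK, hsub, hy, sub_self]
    have hxeq : x = f^[N] y + (x - f^[N] y) := by abel
    rw [hxeq]
    exact Submodule.add_mem _ (Submodule.mem_sup_left h1) (Submodule.mem_sup_right h2)
  -- properties of the candidate
  have hAmaps : Set.MapsTo f (A : Set W) (A : Set W) := by
    intro x hxA
    obtain ⟨y, hy⟩ := (memR N x).mp hxA
    have hfx : f x ∈ R (N + 1) := (memR _ _).mpr ⟨y, by rw [iterate_succ_apply', hy]⟩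
    rw [Rstab (N + 1) (Nat.le_succ _)] at hfx
    exact hfx
  have hAsurj : Set.SurjOn f (A : Set W) (A : Set W) := by
    intro x hx
    have hx' : x ∈ R (N + 1) := by rw [Rstab (N + 1) (Nat.le_succ _)]; exact hx
    obtain ⟨y, hy⟩ := (memR (N + 1) x).mp hx'
    exact ⟨f^[N] y, (memR N _).mpr ⟨y, rfl⟩, (iterate_succ_apply' f N y).symm.trans hy⟩
  have hAinj : Set.InjOn f (A : Set W) := by
    intro x hx y hy hxy
    have hd : x - y ∈ A := Submodule.sub_mem _ hx hy
    have hk : x - y ∈ B := by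
      have h1 : x - y ∈ K 1 := by
        rw [memK, iterate_one, hf, map_sub]
        rw [hf] at hxy
        rw [hxy, sub_self]
      exact Kmono (by omega : (1 : ℕ) ≤ N) h1
    have := Submodule.disjoint_def.mp hdisj _ hd hk
    exact sub_eq_zero.mp this
  have hBmaps : Set.MapsTo f (B : Set W) (B : Set W) := by
    intro x hx
    have hx' : f^[N] x = 0 := (memK N x).mp hx
    refine (memK N (f x)).mpr ?_
    rw [← iterate_succ_apply, iterate_succ_apply', hx', hf, map_zero]
  refine ⟨(A, B), ⟨hcompl, ⟨hAmaps, hAinj, hAsurj⟩, hBmaps, ⟨N, fun x hx => (memK N x).mp hx⟩⟩, ?_⟩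
  -- uniqueness
  rintro ⟨A', B'⟩ ⟨hcompl', ⟨hmaps', hinj', hsurj'⟩, hBmaps', n, hnil'⟩
  have hA'le : A' ≤ A := by
    have key : ∀ m : ℕ, (A' : Set W) ⊆ f^[m] '' (A' : Set W) := by
      intro m
      induction m with
      | zero => simp
      | succ m ih =>
        intro x hx
        obtain ⟨y, hy, hyx⟩ := hsurj' hx
        obtain ⟨z, hz, hzy⟩ := ih hy
        exact ⟨z, hz, by rw [iterate_succ_apply', hzy, hyx]⟩
    intro x hx
    obtain ⟨y, _, hy⟩ := key N hx
    exact (memR N x).mpr ⟨y, hy⟩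
  have hB'le : B' ≤ B := by
    have h1 : B' ≤ K n := fun x hx => (memK n x).mpr (hnil' x hx)
    have h2 : K n ≤ K N := by
      rcases le_total n N with h | h
      · exact Kmono h
      · exact le_of_eq (Kstab n h)
    exact le_trans h1 h2
  have hfr : Module.finrank k A' + Module.finrank k B' =
      Module.finrank k A + Module.finrank k B := by
    rw [Submodule.finrank_add_eq_of_isCompl hcompl', Submodule.finrank_add_eq_of_isCompl hcompl]
  have hfrA : Module.finrank k A' = Module.finrank k A := by
    have := Submodule.finrank_mono hA'le
    have := Submodule.finrank_mono hB'le
    omega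
  have hfrB : Module.finrank k B' = Module.finrank k B := by
    have := Submodule.finrank_mono hA'le
    have := Submodule.finrank_mono hB'le
    omega
  exact Prod.ext (Submodule.eq_of_le_of_finrank_eq hA'le hfrA)
    (Submodule.eq_of_le_of_finrank_eq hB'le hfrB)
end

section
/- Let F be a field containing F_q, F^s a separable closure, and G = Gal(F^s/F). Let M be a finite-dimensional F^s-vector space with a q-semilinear bijective map ψ : M → M (meaning ψ(cm) = c^q ψ(m)). Then the F_q-subspace M^ψ = { m ∈ M : ψ(m) = m } of fixed points satisfies: the natural multiplication map M^ψ ⊗_{F_q} F^s → M is an isomorphism when M is obtained by base change from a Frobenius space over F. Concretely (Lang's theorem for semilinear maps, following Katz): for a finite-dimensional F^s-vector space M with bijective q-semilinear ψ, the map M^{ψ} ⊗_{F_q} F^s → M, m ⊗ c ↦ c·m, is an isomorphism. -/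
open scoped TensorProduct
open Polynomial

lemma lang_aux_fixed {Fq Fs : Type*} [Field Fq] [Fintype Fq] [Field Fs] [Algebra Fq Fs]
    {q : ℕ} (hcard : Fintype.card Fq = q) (hfix : ∀ c : Fq, c ^ q = c)
    (x : Fs) (hx : x ^ q = x) : ∃ b : Fq, algebraMap Fq Fs b = x := by
  classical
  have hq2 : 2 ≤ q := hcard ▸ Fintype.one_lt_card
  set P : Fs[X] := X ^ q - X with hP
  have hPdeg : P.natDegree = q := by
    rw [hP]
    rw [natDegree_sub_eq_left_of_natDegree_lt] <;> simp [natDegree_X_pow] <;> omega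
  have hPne : P ≠ 0 := fun h => by simp [h] at hPdeg; omega
  have hroot : ∀ y : Fs, y ^ q = y → y ∈ P.roots.toFinset := by
    intro y hy
    rw [Multiset.mem_toFinset, mem_roots hPne]
    simp [hP, IsRoot, hy]
  set A : Finset Fs := Finset.univ.image (algebraMap Fq Fs) with hA
  have hAcard : A.card = q := by
    rw [hA, Finset.card_image_of_injective _ (algebraMap Fq Fs).injective,
      Finset.card_univ, hcard]
  have hAsub : A ⊆ P.roots.toFinset := by
    intro y hy
    rw [hA, Finset.mem_image] at hy
    obtain ⟨b, -, rfl⟩ := hy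
    exact hroot _ (by rw [← map_pow, hfix])
  have hcard2 : P.roots.toFinset.card ≤ A.card := by
    rw [hAcard]
    exact le_trans (Multiset.toFinset_card_le _) (hPdeg ▸ P.card_roots')
  have hEq : A = P.roots.toFinset := Finset.eq_of_subset_of_card_le hAsub hcard2
  have := hroot x hx
  rw [← hEq, hA, Finset.mem_image] at this
  obtain ⟨b, -, hb⟩ := this
  exact ⟨b, hb⟩

lemma lang_aux_indep {Fq Fs : Type*} [Field Fq] [Fintype Fq] [Field Fs] [Algebra Fq Fs]
    {q : ℕ} (hcard : Fintype.card Fq = q) (hfix : ∀ c : Fq, c ^ q = c)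
    {σ : Fs →+* Fs} (hσ : ∀ x, σ x = x ^ q)
    {M : Type*} [AddCommGroup M] [Module Fs M] [Module Fq M] [IsScalarTower Fq Fs M]
    (ψ : M →ₛₗ[σ] M)
    {ι : Type*} (v : ι → M) (hv : ∀ i, ψ (v i) = v i)
    (hli : LinearIndependent Fq v) : LinearIndependent Fs v := by
  classical
  have hq2 : 2 ≤ q := hcard ▸ Fintype.one_lt_card
  rw [linearIndependent_iff']
  suffices H : ∀ n (s : Finset ι) (g : ι → Fs), (s.filter (g · ≠ 0)).card ≤ n →
      (∑ i ∈ s, g i • v i = 0) → ∀ i ∈ s, g i = 0 by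
    intro s g hg i hi
    exact H (s.filter (g · ≠ 0)).card s g le_rfl hg i hi
  intro n
  induction n with
  | zero =>
    intro s g hc hsum i hi
    by_contra h
    have : i ∈ s.filter (g · ≠ 0) := Finset.mem_filter.2 ⟨hi, h⟩
    rw [Nat.le_zero, Finset.card_eq_zero] at hc
    rw [hc] at this
    exact absurd this (Finset.notMem_empty i)
  | succ n IH =>
    intro s g hc hsum
    by_cases hempty : s.filter (g · ≠ 0) = ∅
    · intro i hi
      by_contra h
      have : i ∈ s.filter (g · ≠ 0) := Finset.mem_filter.2 ⟨hi, h⟩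
      rw [hempty] at this
      exact absurd this (Finset.notMem_empty i)
    · exfalso
      obtain ⟨i₀, hi₀⟩ := Finset.nonempty_iff_ne_empty.2 hempty
      have hi₀s : i₀ ∈ s := (Finset.mem_filter.1 hi₀).1
      have hgi₀ : g i₀ ≠ 0 := (Finset.mem_filter.1 hi₀).2
      set g' : ι → Fs := fun i => (g i₀)⁻¹ * g i with hg'
      have hg'i₀ : g' i₀ = 1 := inv_mul_cancel₀ hgi₀
      have hsum' : ∑ i ∈ s, g' i • v i = 0 := by
        have : ∑ i ∈ s, g' i • v i = (g i₀)⁻¹ • ∑ i ∈ s, g i • v i := by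
          rw [Finset.smul_sum]
          exact Finset.sum_congr rfl fun i _ => by rw [hg', smul_smul]
        rw [this, hsum, smul_zero]
      have hsum2 : ∑ i ∈ s, (g' i) ^ q • v i = 0 := by
        have := congrArg ψ hsum'
        rw [map_sum, map_zero] at this
        rw [← this]
        exact Finset.sum_congr rfl fun i _ => by
          rw [LinearMap.map_smulₛₗ, hσ, hv]
      set d : ι → Fs := fun i => (g' i) ^ q - g' i with hd
      have hsumd : ∑ i ∈ s, d i • v i = 0 := by
        have : ∀ i ∈ s, d i • v i = (g' i) ^ q • v i - g' i • v i := fun i _ => by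
          rw [hd]; rw [sub_smul]
        rw [Finset.sum_congr rfl this, Finset.sum_sub_distrib, hsum2, hsum', sub_zero]
      have hdcard : (s.filter (d · ≠ 0)).card ≤ n := by
        have hsub : s.filter (d · ≠ 0) ⊆ (s.filter (g · ≠ 0)).erase i₀ := by
          intro i hi
          obtain ⟨his, hdi⟩ := Finset.mem_filter.1 hi
          have hgi : g i ≠ 0 := by
            intro h0
            apply hdi
            rw [hd]
            simp [hg', h0, zero_pow (by omega : q ≠ 0)]
          have hne : i ≠ i₀ := by
            rintro rfl
            apply hdi
            rw [hd]
            simp [hg'i₀]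
          exact Finset.mem_erase.2 ⟨hne, Finset.mem_filter.2 ⟨his, hgi⟩⟩
        have h1 := Finset.card_le_card hsub
        rw [Finset.card_erase_of_mem hi₀] at h1
        omega
      have hdzero : ∀ i ∈ s, d i = 0 := IH s d hdcard hsumd
      have hfix' : ∀ i ∈ s, ∃ b : Fq, algebraMap Fq Fs b = g' i := by
        intro i hi
        apply lang_aux_fixed hcard hfix
        have := hdzero i hi
        rw [hd] at this
        exact sub_eq_zero.1 this
      set b : ι → Fq := fun i => if h : i ∈ s then (hfix' i h).choose else 0 with hb
      have hbspec : ∀ i ∈ s, algebraMap Fq Fs (b i) = g' i := fun i hi => by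
        rw [hb]; simp only [dif_pos hi]; exact (hfix' i hi).choose_spec
      have hsumb : ∑ i ∈ s, b i • v i = 0 := by
        rw [← hsum']
        exact Finset.sum_congr rfl fun i hi => by
          rw [← hbspec i hi, algebraMap_smul]
      have := linearIndependent_iff'.1 hli s b hsumb i₀ hi₀s
      apply one_ne_zero (α := Fs)
      rw [← hg'i₀, ← hbspec i₀ hi₀s, this, map_zero]

lemma lang_aux_inj {Fs : Type*} [Field Fs]
    {V : Type*} [AddCommGroup V] [Module Fs V] [FiniteDimensional Fs V]
    {σ : Fs →+* Fs} (φ : V →ₛₗ[σ] V) (hs : Function.Surjective φ) :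
    Function.Injective φ := by
  classical
  set b := Module.finBasis Fs V with hb
  have hspan : ⊤ ≤ Submodule.span Fs (Set.range fun i => φ (b i)) := by
    intro x _
    obtain ⟨y, rfl⟩ := hs x
    rw [← b.sum_repr y, map_sum]
    apply Submodule.sum_mem
    intro i _
    rw [LinearMap.map_smulₛₗ]
    exact Submodule.smul_mem _ _ (Submodule.subset_span ⟨i, rfl⟩)
  have hli : LinearIndependent Fs fun i => φ (b i) :=
    linearIndependent_of_top_le_span_of_card_eq_finrank hspan (by simp)
  intro x y hxy
  by_contra hne
  have hz : x - y ≠ 0 := sub_ne_zero.2 hne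
  have hφz : φ (x - y) = 0 := by rw [map_sub, hxy, sub_self]
  have h0 : ∑ i, σ (b.repr (x - y) i) • φ (b i) = 0 := by
    calc ∑ i, σ (b.repr (x - y) i) • φ (b i)
        = φ (∑ i, b.repr (x - y) i • b i) := by
          rw [map_sum]
          exact Finset.sum_congr rfl fun i _ => (LinearMap.map_smulₛₗ φ _ _).symm
      _ = 0 := by rw [b.sum_repr, hφz]
  have hall := linearIndependent_iff'.1 hli Finset.univ _ h0
  apply hz
  have : ∀ i, b.repr (x - y) i = 0 := fun i =>
    σ.injective (by rw [hall i (Finset.mem_univ i), map_zero])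
  calc x - y = ∑ i, b.repr (x - y) i • b i := (b.sum_repr (x - y)).symm
    _ = 0 := by
        apply Finset.sum_eq_zero
        intro i _
        rw [this i, zero_smul]

lemma lang_aux_fix_exists {Fs : Type*} [Field Fs] [IsSepClosed Fs]
    {q : ℕ} (hq2 : 2 ≤ q) (hqchar : (q : Fs) = 0)
    {σ : Fs →+* Fs} (hσ : ∀ x, σ x = x ^ q)
    {V : Type*} [AddCommGroup V] [Module Fs V] [FiniteDimensional Fs V]
    (φ : V →ₛₗ[σ] V) (hinj : Function.Injective φ)
    (x : V) (hx : x ≠ 0) : ∃ v : V, v ≠ 0 ∧ φ v = v := by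
  classical
  have hq0 : q ≠ 0 := by omega
  -- if the 0-th iterate lies in the empty span, the vector is zero
  have hdep0 : ∀ (m : V) (n : ℕ), n = 0 →
      (⇑φ)^[n] m ∈ Submodule.span Fs (Set.range fun i : Fin n => (⇑φ)^[(i : ℕ)] m) → m = 0 := by
    rintro m n rfl h
    simpa [Set.range_eq_empty] using h
  -- every nonzero vector has a dependent iterate
  have hDepExists : ∀ m : V, m ≠ 0 → ∃ n,
      (⇑φ)^[n] m ∈ Submodule.span Fs (Set.range fun i : Fin n => (⇑φ)^[(i : ℕ)] m) := by
    intro m hm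
    by_contra hnot
    push_neg at hnot
    set W : ℕ → Submodule Fs V :=
      fun n => Submodule.span Fs (Set.range fun i : Fin n => (⇑φ)^[(i : ℕ)] m) with hW
    have hWlt : ∀ n, W n < W (n + 1) := by
      intro n
      have hle : W n ≤ W (n + 1) := by
        apply Submodule.span_mono
        rintro _ ⟨i, rfl⟩
        exact ⟨⟨(i : ℕ), (i.isLt.trans (Nat.lt_succ_self n))⟩, rfl⟩
      have hmem : (⇑φ)^[n] m ∈ W (n + 1) :=
        Submodule.subset_span ⟨⟨n, Nat.lt_succ_self n⟩, rfl⟩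
      exact lt_of_le_of_ne hle fun h => hnot n (le_of_eq h.symm hmem)
    have hrank : ∀ n, n ≤ Module.finrank Fs (W n) := by
      intro n
      induction n with
      | zero => exact Nat.zero_le _
      | succ n ih =>
        have := Submodule.finrank_lt_finrank_of_lt (hWlt n)
        omega
    have h1 := hrank (Module.finrank Fs V + 1)
    have h2 : Module.finrank Fs (W (Module.finrank Fs V + 1)) ≤ Module.finrank Fs V :=
      Submodule.finrank_le _
    omega
  -- minimal dependency length
  have hQ : ∃ n, 1 ≤ n ∧ ∃ m : V, m ≠ 0 ∧
      (⇑φ)^[n] m ∈ Submodule.span Fs (Set.range fun i : Fin n => (⇑φ)^[(i : ℕ)] m) := by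
    obtain ⟨n, hn⟩ := hDepExists x hx
    refine ⟨n, ?_, x, hx, hn⟩
    rcases Nat.eq_zero_or_pos n with h | h
    · exact absurd (hdep0 x n h hn) hx
    · exact h
  obtain ⟨r, hrmin, hr1, m, hm, hdep⟩ : ∃ r, (∀ k < r, ¬(1 ≤ k ∧ ∃ m : V, m ≠ 0 ∧
      (⇑φ)^[k] m ∈ Submodule.span Fs (Set.range fun i : Fin k => (⇑φ)^[(i : ℕ)] m))) ∧
      1 ≤ r ∧ ∃ m : V, m ≠ 0 ∧
      (⇑φ)^[r] m ∈ Submodule.span Fs (Set.range fun i : Fin r => (⇑φ)^[(i : ℕ)] m) := by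
    obtain ⟨h1, h2⟩ := Nat.find_spec hQ
    exact ⟨Nat.find hQ, fun k hk => Nat.find_min hQ hk, h1, h2⟩
  obtain ⟨r', rfl⟩ : ∃ r', r = r' + 1 := ⟨r - 1, by omega⟩
  rw [Submodule.mem_span_range_iff_exists_fun] at hdep
  obtain ⟨a, ha⟩ := hdep
  -- the constant coefficient is nonzero
  have ha0 : a 0 ≠ 0 := by
    intro h0
    rcases Nat.eq_zero_or_pos r' with hr0 | hr0
    · subst hr0
      have hφm : φ m = 0 := by
        have h := ha
        rw [Fin.sum_univ_one] at h
        simp only [Fin.val_zero, Function.iterate_zero_apply] at h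
        rw [h0, zero_smul] at h
        simpa using h.symm
      exact hm (hinj (by rw [hφm, map_zero]))
    · apply hrmin r' (by omega)
      refine ⟨hr0, φ m, fun h => hm (hinj (by rw [h, map_zero])), ?_⟩
      rw [Submodule.mem_span_range_iff_exists_fun]
      refine ⟨fun j => a j.succ, ?_⟩
      have h2 : (⇑φ)^[r'] (φ m) = (⇑φ)^[r' + 1] m := (Function.iterate_succ_apply φ r' m).symm
      rw [h2, ← ha, Fin.sum_univ_succ, h0, zero_smul, zero_add]
      exact Finset.sum_congr rfl fun j _ => by
        rw [Fin.val_succ, Function.iterate_succ_apply]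
  -- any nontrivial relation among the first r'+1 iterates with nonzero 0-coefficient is absurd
  have hrel : ∀ g : Fin (r' + 1) → Fs,
      (∑ i, g i • (⇑φ)^[(i : ℕ)] m = 0) → g 0 ≠ 0 → False := by
    intro g hgsum hg0
    set t := Finset.univ.filter (fun i : Fin (r' + 1) => g i ≠ 0) with ht
    have htne : t.Nonempty := ⟨0, by simp [ht, hg0]⟩
    set j := t.max' htne with hj
    have hjmem : j ∈ t := t.max'_mem htne
    have hgj : g j ≠ 0 := (Finset.mem_filter.1 hjmem).2
    have hjmax : ∀ i : Fin (r' + 1), g i ≠ 0 → i ≤ j := fun i hi =>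
      t.le_max' i (by simp [ht, hi])
    have h1 : g j • (⇑φ)^[(j : ℕ)] m + ∑ i ∈ Finset.univ.erase j, g i • (⇑φ)^[(i : ℕ)] m = 0 := by
      rw [Finset.add_sum_erase Finset.univ
        (fun i : Fin (r' + 1) => g i • (⇑φ)^[(i : ℕ)] m) (Finset.mem_univ j)]
      exact hgsum
    have h2 : (⇑φ)^[(j : ℕ)] m
        = (g j)⁻¹ • -∑ i ∈ Finset.univ.erase j, g i • (⇑φ)^[(i : ℕ)] m := by
      rw [← eq_neg_of_add_eq_zero_left h1, inv_smul_smul₀ hgj]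
    have hmem : (⇑φ)^[(j : ℕ)] m ∈
        Submodule.span Fs (Set.range fun i : Fin (j : ℕ) => (⇑φ)^[(i : ℕ)] m) := by
      rw [h2]
      apply Submodule.smul_mem
      apply Submodule.neg_mem
      apply Submodule.sum_mem
      intro i hi
      rcases eq_or_ne (g i) 0 with h | h
      · rw [h, zero_smul]; exact Submodule.zero_mem _
      · have hijf : i < j := lt_of_le_of_ne (hjmax i h) (Finset.ne_of_mem_erase hi)
        have hij : (i : ℕ) < (j : ℕ) := hijf
        exact Submodule.smul_mem _ _ (Submodule.subset_span ⟨⟨(i : ℕ), hij⟩, rfl⟩)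
    rcases Nat.eq_zero_or_pos (j : ℕ) with hj0 | hj0
    · exact hm (hdep0 m (j : ℕ) hj0 hmem)
    · exact hrmin (j : ℕ) j.isLt ⟨hj0, m, hm, hmem⟩
  -- extend the coefficients to ℕ
  set a' : ℕ → Fs := fun i => if h : i < r' + 1 then a ⟨i, h⟩ else 0 with ha'
  have ha'0 : a' 0 = a 0 := by simp [ha']
  have ha'succ : ∀ j : Fin r', a' ((j : ℕ) + 1) = a j.succ := by
    intro j
    rw [ha']
    simp only [dif_pos (by omega : (j : ℕ) + 1 < r' + 1)]
    congr 1
  -- the recursion polynomials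
  set p : ℕ → Fs[X] := fun i =>
    Nat.rec (C (a' 0) * X ^ q) (fun i pi => pi ^ q + C (a' (i + 1)) * X ^ q) i with hp
  have hp0 : p 0 = C (a' 0) * X ^ q := rfl
  have hpsucc : ∀ i, p (i + 1) = p i ^ q + C (a' (i + 1)) * X ^ q := fun i => rfl
  have hderiv : ∀ i, derivative (p i) = 0 := by
    intro i
    induction i with
    | zero => simp [hp0, derivative_X_pow, hqchar]
    | succ i ih => simp [hpsucc, derivative_pow, derivative_X_pow, hqchar, ih]
  have heval0 : ∀ i, (p i).eval 0 = 0 := by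
    intro i
    induction i with
    | zero => simp [hp0, zero_pow hq0]
    | succ i ih => simp [hpsucc, ih, zero_pow hq0]
  have ha'0ne : a' 0 ≠ 0 := by rw [ha'0]; exact ha0
  have hdeg : ∀ i, (p i).natDegree = q ^ (i + 1) ∧ (p i).leadingCoeff = a' 0 ^ q ^ i := by
    intro i
    induction i with
    | zero =>
      constructor
      · rw [hp0, natDegree_C_mul ha'0ne, natDegree_X_pow, pow_one]
      · rw [hp0, pow_zero, pow_one]
        exact leadingCoeff_C_mul_X_pow _ _
    | succ i ih =>
      obtain ⟨ihd, ihl⟩ := ih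
      have hne : p i ≠ 0 := fun h => by
        rw [h, leadingCoeff_zero] at ihl
        exact pow_ne_zero _ ha'0ne ihl.symm
      have hd1 : (p i ^ q).natDegree = q ^ (i + 2) := by
        rw [natDegree_pow, ihd]; ring
      have hlt : (C (a' (i + 1)) * X ^ q).degree < (p i ^ q).degree := by
        have hb : (C (a' (i + 1)) * X ^ q).degree ≤ (q : WithBot ℕ) := by
          calc (C (a' (i + 1)) * X ^ q).degree
              ≤ (C (a' (i + 1))).degree + (X ^ q : Fs[X]).degree := degree_mul_le _ _
            _ ≤ 0 + (q : WithBot ℕ) := by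
                exact add_le_add degree_C_le (le_of_eq (degree_X_pow q))
            _ = (q : WithBot ℕ) := zero_add _
        have hbig : (p i ^ q).degree = ((q ^ (i + 2) : ℕ) : WithBot ℕ) := by
          rw [degree_eq_natDegree (pow_ne_zero q hne), hd1]
        rw [hbig]
        apply lt_of_le_of_lt hb
        exact_mod_cast (Nat.cast_lt (α := WithBot ℕ)).2 (by
          calc q = q ^ 1 := (pow_one q).symm
            _ < q ^ (i + 2) := Nat.pow_lt_pow_right hq2 (by omega))
      constructor
      · rw [hpsucc, natDegree_add_eq_left_of_degree_lt hlt]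
        exact hd1
      · rw [hpsucc, add_comm (p i ^ q), leadingCoeff_add_of_degree_lt hlt, leadingCoeff_pow, ihl,
          ← pow_mul, ← pow_succ]
  -- the separable polynomial and its nonzero root
  set P : Fs[X] := p r' - X with hPdef
  have hPd : derivative P = -1 := by
    rw [hPdef, derivative_sub, hderiv, derivative_X, zero_sub]
  have hPsep : P.Separable := by
    rw [Polynomial.Separable, hPd]
    exact isCoprime_one_right.neg_right
  have hPdeg : P.natDegree = q ^ (r' + 1) := by
    rw [hPdef, natDegree_sub_eq_left_of_natDegree_lt, (hdeg r').1]
    rw [natDegree_X, (hdeg r').1]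
    calc 1 < q := by omega
      _ ≤ q ^ (r' + 1) := Nat.le_self_pow (by omega) q
  have hq1r : 2 ≤ q ^ (r' + 1) := le_trans hq2 (Nat.le_self_pow (by omega) q)
  have hPne : P ≠ 0 := fun h => by
    rw [h, natDegree_zero] at hPdeg
    omega
  have hXdvd : X ∣ P := by
    rw [X_dvd_iff, coeff_zero_eq_eval_zero, hPdef]
    simp [heval0]
  obtain ⟨Q, hQfact⟩ := hXdvd
  have hQne : Q ≠ 0 := fun h => hPne (by rw [hQfact, h, mul_zero])
  have hQdeg : Q.natDegree = q ^ (r' + 1) - 1 := by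
    have hmul := natDegree_mul (X_ne_zero (R := Fs)) hQne
    rw [← hQfact, hPdeg, natDegree_X] at hmul
    omega
  have hQsep : Q.Separable := hPsep.of_dvd ⟨X, by rw [hQfact]; ring⟩
  have hQd0 : Q.degree ≠ 0 := by
    rw [degree_eq_natDegree hQne, hQdeg]
    intro h
    rw [show (0 : WithBot ℕ) = ((0 : ℕ) : WithBot ℕ) from rfl, Nat.cast_inj] at h
    omega
  obtain ⟨t, htroot⟩ := IsSepClosed.exists_root Q hQd0 hQsep
  have ht0 : t ≠ 0 := by
    rintro rfl
    have hXQ : X ∣ Q := X_dvd_iff.2 (by rw [coeff_zero_eq_eval_zero]; exact htroot)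
    obtain ⟨R, hR⟩ := hXQ
    exact not_isUnit_X (hPsep.squarefree X ⟨R, by rw [hQfact, hR]; ring⟩)
  have htP : (p r').eval t = t := by
    have hPt : P.eval t = 0 := by
      rw [hQfact, eval_mul, htroot.eq_zero, mul_zero]
    rw [hPdef, eval_sub, eval_X, sub_eq_zero] at hPt
    exact hPt
  -- the coefficients of the fixed vector
  set c : ℕ → Fs := fun i => (p i).eval t with hc
  have hc0 : c 0 = a' 0 * t ^ q := by simp [hc, hp0]
  have hcsucc : ∀ i, c (i + 1) = c i ^ q + a' (i + 1) * t ^ q := by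
    intro i
    simp [hc, hpsucc]
  have hclast : c r' = t := htP
  set v : V := ∑ i : Fin (r' + 1), c (i : ℕ) • (⇑φ)^[(i : ℕ)] m with hv
  have hc0ne : c 0 ≠ 0 := by
    rw [hc0]
    exact mul_ne_zero ha'0ne (pow_ne_zero _ ht0)
  have hvne : v ≠ 0 := by
    intro h
    exact hrel (fun i => c (i : ℕ)) (by rw [← hv, h]) hc0ne
  refine ⟨v, hvne, ?_⟩
  have hwsucc : ∀ n : ℕ, φ ((⇑φ)^[n] m) = (⇑φ)^[n + 1] m := fun n =>
    (Function.iterate_succ_apply' φ n m).symm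
  have h1 : φ v = ∑ i : Fin (r' + 1), (c (i : ℕ)) ^ q • (⇑φ)^[(i : ℕ) + 1] m := by
    rw [hv, map_sum]
    exact Finset.sum_congr rfl fun i _ => by rw [LinearMap.map_smulₛₗ, hσ, hwsucc]
  rw [h1, Fin.sum_univ_castSucc]
  simp only [Fin.coe_castSucc, Fin.val_last]
  have hlast : (c r') ^ q • (⇑φ)^[r' + 1] m
      = ∑ j : Fin (r' + 1), (t ^ q * a j) • (⇑φ)^[(j : ℕ)] m := by
    rw [hclast, ← ha, Finset.smul_sum]
    exact Finset.sum_congr rfl fun j _ => smul_smul _ _ _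
  rw [hlast, Fin.sum_univ_succ (f := fun j : Fin (r' + 1) => (t ^ q * a j) • (⇑φ)^[(j : ℕ)] m)]
  simp only [Fin.val_zero, Fin.val_succ, Function.iterate_zero_apply]
  conv_rhs => rw [hv, Fin.sum_univ_succ]
  simp only [Fin.val_zero, Fin.val_succ, Function.iterate_zero_apply]
  have hB : (t ^ q * a 0) • m = c 0 • m := by rw [hc0, ha'0, mul_comm]
  have hAC : ∑ i : Fin r', (c (i : ℕ)) ^ q • (⇑φ)^[(i : ℕ) + 1] m
      + ∑ j : Fin r', (t ^ q * a j.succ) • (⇑φ)^[(j : ℕ) + 1] m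
      = ∑ j : Fin r', c ((j : ℕ) + 1) • (⇑φ)^[(j : ℕ) + 1] m := by
    rw [← Finset.sum_add_distrib]
    refine Finset.sum_congr rfl fun j _ => ?_
    rw [← add_smul, hcsucc, ha'succ, mul_comm (t ^ q)]
  calc ∑ i : Fin r', (c (i : ℕ)) ^ q • (⇑φ)^[(i : ℕ) + 1] m
      + ((t ^ q * a 0) • m + ∑ j : Fin r', (t ^ q * a j.succ) • (⇑φ)^[(j : ℕ) + 1] m)
      = (t ^ q * a 0) • m + (∑ i : Fin r', (c (i : ℕ)) ^ q • (⇑φ)^[(i : ℕ) + 1] m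
        + ∑ j : Fin r', (t ^ q * a j.succ) • (⇑φ)^[(j : ℕ) + 1] m) := by abel
    _ = c 0 • m + ∑ j : Fin r', c ((j : ℕ) + 1) • (⇑φ)^[(j : ℕ) + 1] m := by rw [hB, hAC]

/-!
STATEMENT 8 (Lang's theorem for semilinear maps, after Katz): over a separably closed field
`F^s ⊇ F_q`, for a finite-dimensional `F^s`-vector space `M` with a bijective `q`-semilinear
endomorphism `ψ`, the multiplication map `M^ψ ⊗_{F_q} F^s → M`, `m ⊗ c ↦ c·m`, is an
isomorphism, where `M^ψ` is the `F_q`-subspace of `ψ`-fixed points.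
-/

theorem lang_isomorphism_of_semilinear
    {Fq Fs : Type*} [Field Fq] [Fintype Fq] [Field Fs] [Algebra Fq Fs] [IsSepClosed Fs]
    {q : ℕ} (hcard : Fintype.card Fq = q) (hfix : ∀ c : Fq, c ^ q = c)
    {σ : Fs →+* Fs} (hσ : ∀ x, σ x = x ^ q)
    {M : Type*} [AddCommGroup M] [Module Fs M] [FiniteDimensional Fs M]
    [Module Fq M] [IsScalarTower Fq Fs M]
    (ψ : M →ₛₗ[σ] M) (hψ : Function.Bijective ψ)
    -- `K` is the `F_q`-subspace of `ψ`-fixed points `M^ψ`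
    (K : Submodule Fq M) (hK : ∀ m : M, m ∈ K ↔ ψ m = m)
    -- `f` is the multiplication map `M^ψ ⊗_{F_q} F^s → M`, `m ⊗ c ↦ c • m`
    (f : (↥K) ⊗[Fq] Fs →ₗ[Fq] M)
    (hf : ∀ (m : ↥K) (c : Fs), f (m ⊗ₜ c) = c • (m : M)) :
    Function.Bijective f := by
  classical
  have hq2 : 2 ≤ q := hcard ▸ Fintype.one_lt_card
  have hq0 : q ≠ 0 := by omega
  have hcq : (q : Fq) = 0 := by
    rw [← hcard]
    exact FiniteField.cast_card_eq_zero Fq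
  have hqchar : (q : Fs) = 0 := by
    rw [← map_natCast (algebraMap Fq Fs) q, hcq, map_zero]
  -- Artin–Schreier equations are solvable over a separably closed field
  have hAS : ∀ d : Fs, ∃ c : Fs, c ^ q - c = d := by
    intro d
    set P : Fs[X] := X ^ q - X - C d with hP
    have hdeg1 : (X ^ q - X : Fs[X]).natDegree = q := by
      rw [natDegree_sub_eq_left_of_natDegree_lt, natDegree_X_pow]
      rw [natDegree_X, natDegree_X_pow]; omega
    have hdeg : P.natDegree = q := by
      rw [hP, natDegree_sub_eq_left_of_natDegree_lt, hdeg1]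
      rw [hdeg1, natDegree_C]
      omega
    have hne : P ≠ 0 := fun h => by rw [h, natDegree_zero] at hdeg; omega
    have hd : derivative P = -1 := by
      rw [hP]
      simp [derivative_X_pow, hqchar]
    have hsep : P.Separable := by
      rw [Polynomial.Separable, hd]
      exact isCoprime_one_right.neg_right
    have hd0 : P.degree ≠ 0 := by
      rw [degree_eq_natDegree hne, hdeg]
      intro h
      rw [show (0 : WithBot ℕ) = ((0 : ℕ) : WithBot ℕ) from rfl, Nat.cast_inj] at h
      omega
    obtain ⟨c, hc⟩ := IsSepClosed.exists_root P hd0 hsep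
    refine ⟨c, ?_⟩
    have h2 : c ^ q - c - d = 0 := by
      have := hc
      rw [hP] at this
      simpa [IsRoot] using this
    exact sub_eq_zero.1 h2
  -- the span of the fixed points
  set N : Submodule Fs M := Submodule.span Fs (K : Set M) with hN
  have hKN : ∀ k : M, k ∈ K → k ∈ N := fun k hk => Submodule.subset_span hk
  have hNstable : N ≤ Submodule.comap ψ N := by
    rw [hN]
    apply Submodule.span_le.2
    intro k hk
    have hkk : ψ k = k := (hK k).1 hk
    exact Submodule.mem_comap.2 (by rw [hkk]; exact Submodule.subset_span hk)
  -- the fixed points span M over Fs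
  have hNtop : N = ⊤ := by
    by_contra hneq
    have hlt : N < ⊤ := lt_top_iff_ne_top.2 hneq
    have : Nontrivial (M ⧸ N) := Submodule.Quotient.nontrivial_iff.2 hlt.ne
    obtain ⟨x0, hx0⟩ := exists_ne (0 : M ⧸ N)
    set φq : (M ⧸ N) →ₛₗ[σ] (M ⧸ N) := N.mapQ N ψ hNstable with hφq
    have hφqsurj : Function.Surjective φq := by
      intro y
      obtain ⟨y', rfl⟩ := N.mkQ_surjective y
      obtain ⟨z, rfl⟩ := hψ.2 y'
      exact ⟨N.mkQ z, rfl⟩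
    have hφqinj := lang_aux_inj φq hφqsurj
    obtain ⟨vb, hvb0, hvbfix⟩ := lang_aux_fix_exists hq2 hqchar hσ φq hφqinj x0 hx0
    obtain ⟨xv, rfl⟩ := N.mkQ_surjective vb
    have hfix2 : N.mkQ (ψ xv) = N.mkQ xv := hvbfix
    have hmemN : ψ xv - xv ∈ N := by
      have := hfix2
      rw [Submodule.mkQ_apply, Submodule.mkQ_apply, Submodule.Quotient.eq] at this
      exact this
    have hrep : ∃ (n : ℕ) (fc : Fin n → Fs) (g : Fin n → M), (∀ i, g i ∈ K) ∧
        ∑ i, fc i • g i = ψ xv - xv := by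
      rw [hN] at hmemN
      obtain ⟨n, fc, g, hsum⟩ := Submodule.mem_span_set'.1 hmemN
      exact ⟨n, fc, fun i => (g i : M), fun i => (g i).2, hsum⟩
    obtain ⟨n, fc, g, hgK, hgsum⟩ := hrep
    choose co hco using fun i => hAS (fc i)
    set y : M := ∑ i, co i • g i with hy
    have hyN : y ∈ N := Submodule.sum_mem _ fun i _ =>
      Submodule.smul_mem _ _ (hKN _ (hgK i))
    have hψy : ψ y - y = ψ xv - xv := by
      rw [hy, map_sum, ← hgsum, ← Finset.sum_sub_distrib]
      refine Finset.sum_congr rfl fun i _ => ?_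
      rw [LinearMap.map_smulₛₗ, hσ, (hK _).1 (hgK i), ← sub_smul, hco]
    have hzfix : ψ (xv - y) = xv - y := by
      rw [map_sub, sub_eq_sub_iff_sub_eq_sub]
      exact hψy.symm
    have hzN : xv - y ∈ N := hKN _ ((hK _).2 hzfix)
    have hxvN : xv ∈ N := by
      have := N.add_mem hzN hyN
      rwa [sub_add_cancel] at this
    apply hvb0
    rw [Submodule.mkQ_apply, Submodule.Quotient.mk_eq_zero]
    exact hxvN
  constructor
  · -- injectivity
    set b := Module.Basis.ofVectorSpace Fq (↥K) with hb
    have hvK : ∀ i, ψ ((b i : ↥K) : M) = ((b i : ↥K) : M) := fun i => (hK _).1 (b i).2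
    have hliFq : LinearIndependent Fq (fun i => ((b i : ↥K) : M)) :=
      b.linearIndependent.map' K.subtype (Submodule.ker_subtype K)
    have hliFs : LinearIndependent Fs (fun i => ((b i : ↥K) : M)) :=
      lang_aux_indep hcard hfix hσ ψ _ hvK hliFq
    have hrepr : ∀ zz : (↥K) ⊗[Fq] Fs, ∃ gg : _ →₀ Fs,
        zz = gg.sum fun i cc => (b i : ↥K) ⊗ₜ[Fq] cc := by
      intro zz
      induction zz using TensorProduct.induction_on with
      | zero => exact ⟨0, by simp⟩
      | tmul k cc =>
        refine ⟨(b.repr k).mapRange (fun aa => aa • cc) (by simp), ?_⟩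
        rw [Finsupp.sum_mapRange_index (fun _ => by simp)]
        have hk : ((b.repr k).sum fun i aa => aa • b i) = k := by
          rw [← Finsupp.linearCombination_apply, b.linearCombination_repr]
        calc k ⊗ₜ[Fq] cc = ((b.repr k).sum fun i aa => aa • b i) ⊗ₜ[Fq] cc := by rw [hk]
          _ = (b.repr k).sum fun i aa => (aa • b i) ⊗ₜ[Fq] cc := by
              rw [Finsupp.sum, Finsupp.sum, TensorProduct.sum_tmul]
          _ = (b.repr k).sum fun i aa => (b i : ↥K) ⊗ₜ[Fq] (aa • cc) := by
              refine Finset.sum_congr rfl fun i _ => ?_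
              exact TensorProduct.smul_tmul _ _ _
      | add z1 z2 ih1 ih2 =>
        obtain ⟨g1, hg1⟩ := ih1
        obtain ⟨g2, hg2⟩ := ih2
        refine ⟨g1 + g2, ?_⟩
        rw [hg1, hg2, Finsupp.sum_add_index (fun _ _ => by simp)
          (fun _ _ _ _ => TensorProduct.tmul_add _ _ _)]
    intro z1 z2 hz
    have hsub : f (z1 - z2) = 0 := by rw [map_sub, hz, sub_self]
    obtain ⟨gg, hgg⟩ := hrepr (z1 - z2)
    have hfz : (gg.sum fun i cc => cc • ((b i : ↥K) : M)) = 0 := by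
      rw [← hsub, hgg, Finsupp.sum, Finsupp.sum, map_sum]
      exact Finset.sum_congr rfl fun i _ => (hf _ _).symm
    have hg0 : gg = 0 := by
      apply linearIndependent_iff.1 hliFs gg
      rw [Finsupp.linearCombination_apply]
      exact hfz
    rw [hg0, Finsupp.sum_zero_index] at hgg
    exact sub_eq_zero.1 hgg
  · -- surjectivity
    intro mm
    have hmm : mm ∈ Submodule.span Fs (K : Set M) := by
      rw [← hN, hNtop]; exact Submodule.mem_top
    have key : ∀ u ∈ Submodule.span Fs (K : Set M), ∀ cc : Fs, ∃ yy, f yy = cc • u := by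
      intro u hu
      induction hu using Submodule.span_induction with
      | mem u hu => exact fun cc => ⟨⟨u, hu⟩ ⊗ₜ cc, hf _ _⟩
      | zero => exact fun cc => ⟨0, by rw [map_zero, smul_zero]⟩
      | add u w hu hw ihu ihw =>
        intro cc
        obtain ⟨y1, hy1⟩ := ihu cc
        obtain ⟨y2, hy2⟩ := ihw cc
        exact ⟨y1 + y2, by rw [map_add, hy1, hy2, smul_add]⟩
      | smul d u hu ih =>
        intro cc
        obtain ⟨y1, hy1⟩ := ih (cc * d)
        exact ⟨y1, by rw [hy1, mul_smul]⟩
    obtain ⟨yy, hyy⟩ := key mm hmm 1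
    exact ⟨yy, by rw [hyy, one_smul]⟩
end

section
/- Let 0 → D' → D → D'' → 0 be a short exact sequence of isocrystals over a field F. If the slope of every nonzero subisocrystal of D' is strictly greater than 0 (i.e. μ(D') > 0 in the sense that D' has all slopes positive, given via a lattice L ⊆ D' with ⟨φ^h L⟩ ⊆ 𝔪L for some h > 0), and D'' is the unit isocrystal 𝟙, then the sequence splits. Concretely: if D' = (D', φ') admits an A(F)-lattice L with φ'^h(σ^{h*}L) ⊆ 𝔪L for some h > 0, then id − φ' is surjective on D', and hence Ext^1(𝟙, D') = 0. -/
open scoped TensorProduct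

namespace IsocAux

variable {R : Type*} [CommRing R]

theorem mul_coeff_vanish {f g : LaurentSeries R} {s t n : ℤ}
    (hf : ∀ m < s, f.coeff m = 0) (hg : ∀ m < t, g.coeff m = 0) (hn : n < s + t) :
    (f * g).coeff n = 0 := by
  rw [HahnSeries.coeff_mul]
  refine Finset.sum_eq_zero ?_
  rintro ⟨a, c⟩ hac
  rw [Finset.mem_addAntidiagonal] at hac
  by_cases ha : a < s
  · rw [hf a ha, zero_mul]
  · rw [hg c (by omega), mul_zero]

theorem single_one_mul_coeff (a : ℤ) (g : LaurentSeries R) (n : ℤ) :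
    ((HahnSeries.single a (1 : R)) * g).coeff n = g.coeff (n - a) := by
  have := HahnSeries.coeff_single_mul_add (r := (1 : R)) (x := g) (a := n - a) (b := a)
  rw [sub_add_cancel, one_mul] at this
  exact this

theorem ofPowerSeries_coeff_neg (p : PowerSeries R) {n : ℤ} (hn : n < 0) :
    (HahnSeries.ofPowerSeries ℤ R p).coeff n = 0 := by
  by_contra hne
  have hmem : n ∈ (HahnSeries.ofPowerSeries ℤ R p).support := hne
  rw [HahnSeries.ofPowerSeries_apply] at hmem
  rcases HahnSeries.support_embDomain_subset hmem with ⟨m, -, rfl⟩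
  simp at hn
  omega

theorem eq_ofPowerSeries (f : LaurentSeries R) (hf : ∀ m < (0 : ℤ), f.coeff m = 0) :
    f = HahnSeries.ofPowerSeries ℤ R (PowerSeries.mk fun m : ℕ => f.coeff m) := by
  ext n
  rcases le_or_gt 0 n with hn | hn
  · obtain ⟨m, rfl⟩ := Int.eq_ofNat_of_zero_le hn
    rw [HahnSeries.ofPowerSeries_apply_coeff, PowerSeries.coeff_mk]
  · rw [hf n hn, ofPowerSeries_coeff_neg _ hn]

/-- Every Laurent series has a lower bound for its support. -/
theorem exists_lb (f : LaurentSeries R) : ∃ t : ℤ, ∀ m < t, f.coeff m = 0 := by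
  by_cases hf : f = 0
  · exact ⟨0, fun m _ => by simp [hf]⟩
  · exact ⟨f.order, fun m hm => HahnSeries.coeff_eq_zero_of_lt_order hm⟩

/-- Uniform lower bound for a finite family of integers. -/
theorem exists_uniform_lb {ι : Type*} [Fintype ι] (g : ι → ℤ) : ∃ t : ℤ, ∀ j, t ≤ g j := by
  refine ⟨-∑ j, |g j|, fun j => ?_⟩
  have h1 : |g j| ≤ ∑ k, |g k| :=
    Finset.single_le_sum (f := fun k => |g k|) (fun k _ => abs_nonneg _) (Finset.mem_univ j)
  have := neg_abs_le (g j)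
  omega

theorem main_aux {R : Type*} [CommRing R]
    (τB : LaurentSeries R →+* LaurentSeries R) (τ₀ : R →+* R)
    (hτB : ∀ (x : LaurentSeries R) (n : ℤ), (τB x).coeff n = τ₀ (x.coeff n))
    {D : Type*} [AddCommGroup D] [Module (LaurentSeries R) D]
    [Module (PowerSeries R) D]
    [IsScalarTower (PowerSeries R) (LaurentSeries R) D]
    [Module.Free (LaurentSeries R) D] [Module.Finite (LaurentSeries R) D]
    (φ : D →ₛₗ[τB] D)
    (L : Submodule (PowerSeries R) D) (hLfg : L.FG)
    (hLspan : Submodule.span (LaurentSeries R) (L : Set D) = ⊤)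
    (h : ℕ) (hh : 0 < h)
    (hslope : Submodule.span (PowerSeries R) ((⇑φ)^[h] '' (L : Set D)) ≤
      Submodule.map
        (DistribMulAction.toLinearMap (PowerSeries R) D
          (PowerSeries.X : PowerSeries R)) L) :
    Function.Surjective (fun x : D => x - φ x) := by
  classical
  -- basic objects
  set ι := Module.Free.ChooseBasisIndex (LaurentSeries R) D with hι
  let b : Module.Basis ι (LaurentSeries R) D := Module.Free.chooseBasis (LaurentSeries R) D
  set XB : LaurentSeries R := HahnSeries.single (1 : ℤ) (1 : R) with hXB
  -- τB fixes single a 1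
  have hτsingle : ∀ a : ℤ, τB (HahnSeries.single a (1 : R)) = HahnSeries.single a (1 : R) := by
    intro a
    ext n
    rw [hτB, HahnSeries.coeff_single]
    split_ifs <;> simp
  -- the A-action through B
  have hA : ∀ (p : PowerSeries R) (z : D), p • z = (HahnSeries.ofPowerSeries ℤ R p) • z := by
    intro p z
    rw [← LaurentSeries.coe_algebraMap, algebraMap_smul]
  have hXBpow : ∀ k : ℕ, XB ^ k = HahnSeries.single (k : ℤ) (1 : R) := by
    intro k
    rw [hXB, HahnSeries.single_pow, one_pow, nsmul_eq_mul, mul_one]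
  -- the coefficient-vanishing predicate
  let V : ℤ → D → Prop := fun t z => ∀ (j : ι) (n : ℤ), n < t → ((b.repr z) j).coeff n = 0
  have hV0 : ∀ t, V t 0 := by intro t j n _; simp
  have hVadd : ∀ t z1 z2, V t z1 → V t z2 → V t (z1 + z2) := by
    intro t z1 z2 h1 h2 j n hn
    rw [map_add, Finsupp.add_apply, HahnSeries.coeff_add, h1 j n hn, h2 j n hn, add_zero]
  have hVsub : ∀ t z1 z2, V t z1 → V t z2 → V t (z1 - z2) := by
    intro t z1 z2 h1 h2 j n hn
    rw [map_sub, Finsupp.sub_apply, HahnSeries.coeff_sub, h1 j n hn, h2 j n hn, sub_zero]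
  have hVmono : ∀ (t' t : ℤ) (z : D), t' ≤ t → V t z → V t' z :=
    fun t' t z ht hz j n hn => hz j n (lt_of_lt_of_le hn ht)
  have hVsmul : ∀ (sb tb : ℤ) (c : LaurentSeries R) (z : D),
      (∀ m < sb, c.coeff m = 0) → V tb z → V (sb + tb) (c • z) := by
    intro sb tb c z hc hz j n hn
    rw [map_smul, Finsupp.smul_apply, smul_eq_mul]
    exact mul_coeff_vanish hc (hz j) hn
  have hexV : ∀ z, ∃ t, V t z := by
    intro z
    have hg : ∀ j, ∃ t, ∀ m < t, ((b.repr z) j).coeff m = 0 := fun j => exists_lb _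
    choose g hg using hg
    obtain ⟨t, ht⟩ := exists_uniform_lb g
    exact ⟨t, fun j n hn => hg j n (lt_of_lt_of_le hn (ht j))⟩
  -- continuity of φ with respect to V
  have hVφex : ∃ mφ : ℤ, ∀ t z, V t z → V (t - mφ) (φ z) := by
    have hg : ∀ j, ∃ t, V t (φ (b j)) := fun j => hexV _
    choose g hg using hg
    obtain ⟨tφ, htφ⟩ := exists_uniform_lb g
    refine ⟨-tφ, fun t z hz => ?_⟩
    have hz' : φ z = ∑ j, τB (b.repr z j) • φ (b j) := by
      conv_lhs => rw [← b.sum_repr z, map_sum]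
      exact Finset.sum_congr rfl fun j _ => φ.map_smulₛₗ _ _
    rw [hz', sub_neg_eq_add]
    refine Finset.sum_induction _ (V (t + tφ)) (hVadd _) (hV0 _) ?_
    intro j _
    have h1 : ∀ m < t, (τB (b.repr z j)).coeff m = 0 := fun m hm => by
      rw [hτB, hz j m hm, map_zero]
    have h2 : V tφ (φ (b j)) := fun j' n hn => hg j j' n (lt_of_lt_of_le hn (htφ j))
    exact hVsmul t tφ _ _ h1 h2
  obtain ⟨mφ, hVφ⟩ := hVφex
  -- φ commutes with powers of X
  have hXiter : ∀ (N k : ℕ) (z : D), (⇑φ)^[N] ((XB ^ k) • z) = (XB ^ k) • (⇑φ)^[N] z := by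
    intro N
    induction N with
    | zero => intro k z; simp
    | succ N ih =>
      intro k z
      rw [Function.iterate_succ_apply, Function.iterate_succ_apply, φ.map_smulₛₗ,
        hXBpow, hτsingle, ← hXBpow, ih]
  -- iterates of φ on the lattice
  have hLstep : ∀ l ∈ L, ∃ l' ∈ L, (⇑φ)^[h] l = XB • l' := by
    intro l hl
    have hmem : (⇑φ)^[h] l ∈ Submodule.map
        (DistribMulAction.toLinearMap (PowerSeries R) D (PowerSeries.X : PowerSeries R)) L :=
      hslope (Submodule.subset_span ⟨l, hl, rfl⟩)
    obtain ⟨l', hl', hEq⟩ := hmem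
    refine ⟨l', hl', ?_⟩
    rw [← hEq]
    show (PowerSeries.X : PowerSeries R) • l' = XB • l'
    rw [hA, HahnSeries.ofPowerSeries_X]
  have hLpow : ∀ (m : ℕ), ∀ l ∈ L, ∃ l' ∈ L, (⇑φ)^[h * m] l = (XB ^ m) • l' := by
    intro m
    induction m with
    | zero => intro l hl; exact ⟨l, hl, by simp⟩
    | succ m ih =>
      intro l hl
      obtain ⟨l1, hl1, he1⟩ := hLstep l hl
      obtain ⟨l2, hl2, he2⟩ := ih l1 hl1
      refine ⟨l2, hl2, ?_⟩
      have hmm : h * (m + 1) = h * m + h := by ring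
      rw [hmm, Function.iterate_add_apply, he1]
      have h1 := hXiter (h * m) 1 l1
      rw [pow_one] at h1
      rw [h1, he2, smul_smul]
      congr 1
      rw [← pow_succ']
  -- a uniform bound on the lattice
  have hL0 : ∃ t₀, ∀ l ∈ L, V t₀ l := by
    obtain ⟨S, hS⟩ := hLfg
    have hbase : ∃ t₀, ∀ s ∈ S, V t₀ s := by
      have hg : ∀ s : S, ∃ t, V t (s : D) := fun s => hexV _
      choose g hg using hg
      obtain ⟨t₀, ht₀⟩ := exists_uniform_lb g
      exact ⟨t₀, fun s hs => hVmono _ _ _ (ht₀ ⟨s, hs⟩) (hg ⟨s, hs⟩)⟩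
    obtain ⟨t₀, ht₀⟩ := hbase
    refine ⟨t₀, fun l hl => ?_⟩
    rw [← hS] at hl
    refine Submodule.span_induction (fun z hz => ht₀ z hz) (hV0 _)
      (fun z1 z2 _ _ h1 h2 => hVadd _ _ _ h1 h2) (fun a z _ hz => ?_) hl
    rw [hA]
    have hps : ∀ m < (0 : ℤ), (HahnSeries.ofPowerSeries ℤ R a).coeff m = 0 :=
      fun m hm => ofPowerSeries_coeff_neg a hm
    have := hVsmul 0 t₀ _ _ hps hz
    rwa [zero_add] at this
  obtain ⟨t₀, hL0⟩ := hL0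
  -- a uniform bound for φ-iterates on the lattice
  have hT : ∃ T, ∀ r ≤ h, ∀ l ∈ L, V T ((⇑φ)^[r] l) := by
    refine ⟨t₀ - (h : ℤ) * |mφ|, ?_⟩
    have key : ∀ (r : ℕ), ∀ l ∈ L, V (t₀ - (r : ℤ) * mφ) ((⇑φ)^[r] l) := by
      intro r
      induction r with
      | zero => intro l hl; simpa using hL0 l hl
      | succ r ih =>
        intro l hl
        have := hVφ _ _ (ih l hl)
        rw [Function.iterate_succ_apply']
        refine hVmono _ _ _ ?_ this
        push_cast
        ring_nf
        omega
    intro r hr l hl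
    refine hVmono _ _ _ ?_ (key r l hl)
    have habs : (r : ℤ) * mφ ≤ (h : ℤ) * |mφ| := by
      rcases le_or_gt mφ 0 with hm | hm
      · have h1 : (r : ℤ) * mφ ≤ 0 := mul_nonpos_of_nonneg_of_nonpos (by positivity) hm
        have h2 : (0 : ℤ) ≤ (h : ℤ) * |mφ| := by positivity
        omega
      · rw [abs_of_pos hm]
        exact mul_le_mul_of_nonneg_right (by exact_mod_cast hr) hm.le
    omega
  obtain ⟨T, hT⟩ := hT
  have hXA : ∀ (k : ℕ) (z : D), (PowerSeries.X ^ k : PowerSeries R) • z = (XB ^ k) • z := by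
    intro k z
    rw [hA, map_pow, HahnSeries.ofPowerSeries_X, hXB]
  -- reduction: it suffices to hit elements of L
  suffices hsuff : ∀ y ∈ L, ∃ x, x - φ x = y by
    intro y
    have hK : ∃ K : ℕ, (XB ^ K) • y ∈ L := by
      have hy : y ∈ Submodule.span (LaurentSeries R) (L : Set D) := hLspan ▸ Submodule.mem_top
      refine Submodule.span_induction ?_ ?_ ?_ ?_ hy
      · intro z hz; exact ⟨0, by simpa using hz⟩
      · exact ⟨0, by simp⟩
      · rintro z1 z2 _ _ ⟨K1, h1⟩ ⟨K2, h2⟩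
        refine ⟨K1 + K2, ?_⟩
        have e : (XB ^ (K1 + K2)) • (z1 + z2)
            = (PowerSeries.X ^ K2 : PowerSeries R) • ((XB ^ K1) • z1)
              + (PowerSeries.X ^ K1 : PowerSeries R) • ((XB ^ K2) • z2) := by
          rw [hXA, hXA, smul_smul, smul_smul, ← pow_add, ← pow_add, smul_add, add_comm K2 K1,
            add_comm K1 K2]
        rw [e]
        exact L.add_mem (L.smul_mem _ h1) (L.smul_mem _ h2)
      · rintro c z _ ⟨K, hKm⟩
        obtain ⟨sc, hsc⟩ := exists_lb c
        set Kc := (-sc).toNat with hKc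
        have hv : ∀ m < (0 : ℤ), ((XB ^ Kc) * c).coeff m = 0 := by
          intro m hm
          rw [hXBpow, single_one_mul_coeff]
          apply hsc
          have h1 : -sc ≤ ((-sc).toNat : ℤ) := Int.self_le_toNat _
          omega
        refine ⟨Kc + K, ?_⟩
        have e : (XB ^ (Kc + K)) • (c • z) = ((XB ^ Kc) * c) • ((XB ^ K) • z) := by
          rw [smul_smul, smul_smul, pow_add]
          congr 1
          ring
        rw [e, eq_ofPowerSeries ((XB ^ Kc) * c) hv, ← hA]
        exact L.smul_mem _ hKm
    obtain ⟨K, hKmem⟩ := hK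
    obtain ⟨x', hx'⟩ := hsuff _ hKmem
    refine ⟨HahnSeries.single (-(K : ℤ)) (1 : R) • x', ?_⟩
    show HahnSeries.single (-(K : ℤ)) (1 : R) • x'
        - φ (HahnSeries.single (-(K : ℤ)) (1 : R) • x') = y
    rw [φ.map_smulₛₗ, hτsingle, ← smul_sub, hx', hXBpow, smul_smul,
      HahnSeries.single_mul_single, one_mul, neg_add_cancel, HahnSeries.single_zero_one, one_smul]
  intro y hy
  -- partial sums of the geometric series
  set s : ℕ → D := fun N => ∑ n ∈ Finset.range N, (⇑φ)^[n] y with hsdef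
  have hsstep : ∀ N, s (N + 1) = s N + (⇑φ)^[N] y := fun N => Finset.sum_range_succ _ N
  set c : ℕ → ℤ := fun N => T + ((N / h : ℕ) : ℤ) with hcdef
  have hterm : ∀ N, V (c N) ((⇑φ)^[N] y) := by
    intro N
    obtain ⟨l', hl', he⟩ := hLpow (N / h) y hy
    have hN : N % h + h * (N / h) = N := Nat.mod_add_div N h
    have hiter : (⇑φ)^[N] y = (XB ^ (N / h)) • (⇑φ)^[N % h] l' := by
      conv_lhs => rw [← hN]
      rw [Function.iterate_add_apply, he, hXiter]
    rw [hiter]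
    have h2 : V T ((⇑φ)^[N % h] l') := hT (N % h) (le_of_lt (Nat.mod_lt _ hh)) l' hl'
    have hc1 : ∀ m < ((N / h : ℕ) : ℤ), (XB ^ (N / h)).coeff m = 0 := by
      intro m hm
      rw [hXBpow, HahnSeries.coeff_single, if_neg (by omega)]
    have := hVsmul _ _ _ _ hc1 h2
    exact hVmono _ _ _ (le_of_eq (by simp only [hcdef]; ring)) this
  have hcmono : ∀ {N M : ℕ}, N ≤ M → c N ≤ c M := by
    intro N M hNM
    have := Nat.div_le_div_right (c := h) hNM
    simp only [hcdef]
    omega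
  have hsV : ∀ N, V T (s N) := by
    intro N
    refine Finset.sum_induction _ (V T) (hVadd _) (hV0 _) ?_
    intro i _
    refine hVmono _ _ _ ?_ (hterm i)
    simp only [hcdef, le_add_iff_nonneg_right]
    positivity
  have hstab : ∀ (N M : ℕ) (j : ι) (n : ℤ), N ≤ M → n < c N →
      ((b.repr (s M)) j).coeff n = ((b.repr (s N)) j).coeff n := by
    intro N M j n hNM hn
    induction M, hNM using Nat.le_induction with
    | base => rfl
    | succ M hNM ih =>
      rw [hsstep, map_add, Finsupp.add_apply, HahnSeries.coeff_add, ih,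
        hterm M j n (lt_of_lt_of_le hn (hcmono hNM)), add_zero]
  -- the limit candidate, coefficientwise
  set Nn : ℤ → ℕ := fun n => h * ((n - T).toNat + 1) with hNndef
  have hcNn : ∀ n : ℤ, n < c (Nn n) := by
    intro n
    have h1 : (Nn n) / h = (n - T).toNat + 1 := by
      simp only [hNndef]
      exact Nat.mul_div_cancel_left _ hh
    have h2 : n - T ≤ ((n - T).toNat : ℤ) := Int.self_le_toNat _
    simp only [hcdef, h1]
    omega
  set f : ι → LaurentSeries R := fun j =>
    (HahnSeries.single T (1 : R)) *
      HahnSeries.ofPowerSeries ℤ R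
        (PowerSeries.mk fun m : ℕ => ((b.repr (s (Nn (T + m)))) j).coeff (T + m)) with hfdef
  have hf : ∀ (j : ι) (n : ℤ), (f j).coeff n = ((b.repr (s (Nn n))) j).coeff n := by
    intro j n
    rcases le_or_gt T n with hn | hn
    · have hcast : n - T = (((n - T).toNat : ℕ) : ℤ) := (Int.toNat_of_nonneg (by omega)).symm
      have hTn : T + (((n - T).toNat : ℕ) : ℤ) = n := by omega
      simp only [hfdef]
      rw [single_one_mul_coeff, hcast, HahnSeries.ofPowerSeries_apply_coeff,
        PowerSeries.coeff_mk, hTn]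
    · simp only [hfdef]
      rw [single_one_mul_coeff, ofPowerSeries_coeff_neg _ (by omega)]
      exact (hsV _ j n hn).symm
  set x : D := ∑ j, f j • b j with hxdef
  have hreprx : ∀ j, (b.repr x) j = f j := by
    intro j
    simp only [hxdef, map_sum, map_smul, Module.Basis.repr_self]
    rw [Finset.sum_apply']
    simp [Finsupp.single_apply, Finsupp.smul_apply]
  have htail : ∀ N, V (c N) (x - s N) := by
    intro N j n hn
    rw [map_sub, Finsupp.sub_apply, HahnSeries.coeff_sub, hreprx, hf]
    rcases le_total N (Nn n) with hle | hle
    · rw [hstab N (Nn n) j n hle hn]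
      ring
    · rw [hstab (Nn n) N j n hle (hcNn n)]
      ring
  -- telescoping identity
  have htel : ∀ N, s N - φ (s N) = y - (⇑φ)^[N] y := by
    intro N
    induction N with
    | zero => simp [hsdef]
    | succ N ih =>
      rw [hsstep, map_add, Function.iterate_succ_apply']
      have e : s N + (⇑φ)^[N] y - (φ (s N) + φ ((⇑φ)^[N] y))
          = (s N - φ (s N)) + ((⇑φ)^[N] y - φ ((⇑φ)^[N] y)) := by abel
      rw [e, ih]
      abel
  have hkey : ∀ N, x - φ x - y = (x - s N) - φ (x - s N) - (⇑φ)^[N] y := by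
    intro N
    rw [map_sub]
    have e : (x - s N) - (φ x - φ (s N)) - (⇑φ)^[N] y
        = (x - φ x) - ((s N - φ (s N)) + (⇑φ)^[N] y) := by abel
    rw [e, htel N]
    abel
  -- conclusion
  refine ⟨x, ?_⟩
  show x - φ x = y
  rw [← sub_eq_zero]
  have hz : ∀ (j : ι) (n : ℤ), ((b.repr (x - φ x - y)) j).coeff n = 0 := by
    intro j n
    set N := h * ((n - T).toNat + mφ.toNat + 1) with hNdef
    have hcN : c N = T + (((n - T).toNat + mφ.toNat + 1 : ℕ) : ℤ) := by
      simp only [hcdef, hNdef, Nat.mul_div_cancel_left _ hh]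
    have h2 : n - T ≤ ((n - T).toNat : ℤ) := Int.self_le_toNat _
    have h3 : mφ ≤ (mφ.toNat : ℤ) := Int.self_le_toNat _
    have hn1 : n < c N := by rw [hcN]; push_cast; omega
    have hn2 : n < c N - mφ := by rw [hcN]; push_cast; omega
    rw [hkey N, map_sub, map_sub, Finsupp.sub_apply, Finsupp.sub_apply,
      HahnSeries.coeff_sub, HahnSeries.coeff_sub,
      htail N j n hn1, hVφ _ _ (htail N) j n hn2, hterm N j n hn1]
    ring
  have hzero : b.repr (x - φ x - y) = 0 := by
    ext j n
    exact hz j n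
  exact (LinearEquiv.map_eq_zero_iff b.repr).mp hzero

end IsocAux


/-!
STATEMENT 13: Let `B(F) = (k ⊗_{F_q} F)((π))` and `A(F) = (k ⊗_{F_q} F)[[π]]`, with `τ` the
coefficient-wise `q`-Frobenius. If an isocrystal `(D', φ')` over `F` admits an `A(F)`-lattice
`L` with `φ'^h(σ^{h*}L) ⊆ 𝔪L` for some `h > 0` (all slopes positive), then `id - φ'` is
surjective on `D'`; hence every extension of the unit isocrystal `𝟙` by `D'` splits
(`Ext¹(𝟙, D') = 0`, extensions being parametrized by `D'/(id - φ')(D')`).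
-/

theorem isocrystal_positive_slopes_id_sub_phi_surjective
    {Fq kk F : Type*} [Field Fq] [Fintype Fq]
    [Field kk] [Algebra Fq kk] [FiniteDimensional Fq kk]
    [Field F] [Algebra Fq F]
    {p q e : ℕ} (hp : p.Prime) [CharP F p] (he : 0 < e) (hq : q = p ^ e)
    (hcard : Fintype.card Fq = q)
    -- the coefficient-wise Frobenius `τ₀ = id_k ⊗ Frob_q` on `k ⊗_{F_q} F` …
    (τ₀ : kk ⊗[Fq] F →+* kk ⊗[Fq] F)
    (hτ₀ : ∀ (a : kk) (b : F), τ₀ (a ⊗ₜ b) = a ⊗ₜ (b ^ q))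
    -- … extended `π`-adically continuously to `B(F) = (k ⊗ F)((π))`
    (τB : LaurentSeries (kk ⊗[Fq] F) →+* LaurentSeries (kk ⊗[Fq] F))
    (hτB : ∀ (x : LaurentSeries (kk ⊗[Fq] F)) (n : ℤ), (τB x).coeff n = τ₀ (x.coeff n))
    -- `(D, φ)` is an isocrystal over `F`: `D` finite free over `B(F)`, `φ` a `τ`-semilinear
    -- bijection onto a spanning set (we record it as a `τB`-semilinear map)
    {D : Type*} [AddCommGroup D] [Module (LaurentSeries (kk ⊗[Fq] F)) D]
    [Module (PowerSeries (kk ⊗[Fq] F)) D]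
    [IsScalarTower (PowerSeries (kk ⊗[Fq] F)) (LaurentSeries (kk ⊗[Fq] F)) D]
    [Module.Free (LaurentSeries (kk ⊗[Fq] F)) D]
    [Module.Finite (LaurentSeries (kk ⊗[Fq] F)) D]
    (φ : D →ₛₗ[τB] D)
    (hφspan : Submodule.span (LaurentSeries (kk ⊗[Fq] F)) (Set.range φ) = ⊤)
    -- an `A(F)`-lattice `L` in `D` with `⟨φ^h L⟩ ⊆ 𝔪·L` for some `h > 0`
    (L : Submodule (PowerSeries (kk ⊗[Fq] F)) D)
    (hLfg : L.FG)
    (hLspan : Submodule.span (LaurentSeries (kk ⊗[Fq] F)) (L : Set D) = ⊤)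
    (h : ℕ) (hh : 0 < h)
    (hslope : Submodule.span (PowerSeries (kk ⊗[Fq] F)) ((⇑φ)^[h] '' (L : Set D)) ≤
      Submodule.map
        (DistribMulAction.toLinearMap (PowerSeries (kk ⊗[Fq] F)) D
          (PowerSeries.X : PowerSeries (kk ⊗[Fq] F))) L) :
    Function.Surjective (fun x : D => x - φ x) :=
  IsocAux.main_aux τB τ₀ hτB φ L hLfg hLspan h hh hslope
end

section
/- Let q = p^e ≥ 2 be a prime power, n a power of p, θ transcendental over F_q, and F ⊇ F_q(θ) a field. For every m(t) ∈ F[t] there exist ε(t) ∈ F[t] of degree < n and p(t) ∈ F[t] such that m(t)/(t−θ)^n = ε(t)/(t−θ)^n + p(t) − p(t)^{(1)}/(t−θ)^n, where p(t)^{(1)} denotes the polynomial obtained from p(t) by raising all coefficients to the q-th power. -/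
open Polynomial

lemma poly_reduction {F : Type*} [Field F] {n : ℕ} (hnpos : 0 < n) (θ : F) (σ : F →+* F) :
    ∀ N : ℕ, ∀ m : Polynomial F, m.natDegree < N → ∃ ε P : Polynomial F,
      ε.degree < (n : ℕ) ∧ m = ε + P * (X - C θ) ^ n - P.map σ := by
  intro N
  induction N with
  | zero => intro m hm; omega
  | succ N ih =>
    intro m hm
    have hDmonic : ((X - C θ) ^ n).Monic := (monic_X_sub_C θ).pow n
    have hDdeg : ((X - C θ) ^ n).degree = (n : WithBot ℕ) := by
      rw [degree_pow, degree_X_sub_C]; simp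
    by_cases hdeg : m.degree < (n : ℕ)
    · exact ⟨m, 0, hdeg, by simp⟩
    · push_neg at hdeg
      have hnle : n ≤ m.natDegree := by
        exact_mod_cast le_trans hdeg m.degree_le_natDegree
      set A := m /ₘ ((X - C θ) ^ n) with hA
      have hAdeg : A.natDegree = m.natDegree - n := by
        simp [hA, natDegree_divByMonic m hDmonic, natDegree_pow, natDegree_X_sub_C]
      have hmapdeg : (A.map σ).natDegree = A.natDegree := natDegree_map σ
      obtain ⟨ε₁, P₁, hε₁, hP₁⟩ := ih (A.map σ) (by rw [hmapdeg, hAdeg]; omega)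
      refine ⟨m %ₘ ((X - C θ) ^ n) + ε₁, A + P₁, ?_, ?_⟩
      · refine lt_of_le_of_lt (degree_add_le _ _) (max_lt ?_ hε₁)
        exact hDdeg ▸ degree_modByMonic_lt m hDmonic
      · have hdiv : m %ₘ ((X - C θ) ^ n) + (X - C θ) ^ n * A = m :=
          modByMonic_add_div m ((X - C θ) ^ n)
        rw [Polynomial.map_add]
        linear_combination -hdiv + hP₁

theorem reduction_modulo_carlitz_twist
    {Fq F : Type*} [Field Fq] [Fintype Fq] [Field F] [Algebra Fq F]
    {p q e n k : ℕ} (hp : p.Prime) [CharP F p] (he : 0 < e) (hq : q = p ^ e)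
    (hcard : Fintype.card Fq = q) (hn : n = p ^ k) (hnpos : 0 < n)
    (θ : F) (hθ : Transcendental Fq θ)
    {σ : F →+* F} (hσ : ∀ x, σ x = x ^ q) :
    ∀ m : Polynomial F, ∃ ε P : Polynomial F, ε.degree < n ∧
      (algebraMap (Polynomial F) (RatFunc F) m) /
          (algebraMap (Polynomial F) (RatFunc F) (Polynomial.X - Polynomial.C θ)) ^ n =
        (algebraMap (Polynomial F) (RatFunc F) ε) /
            (algebraMap (Polynomial F) (RatFunc F) (Polynomial.X - Polynomial.C θ)) ^ n +
          algebraMap (Polynomial F) (RatFunc F) P -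
          (algebraMap (Polynomial F) (RatFunc F) (P.map σ)) /
            (algebraMap (Polynomial F) (RatFunc F) (Polynomial.X - Polynomial.C θ)) ^ n := by
  intro m
  obtain ⟨ε, P, hεdeg, heq⟩ :=
    poly_reduction hnpos θ σ (m.natDegree + 1) m (Nat.lt_succ_self _)
  refine ⟨ε, P, hεdeg, ?_⟩
  have hD : (algebraMap (Polynomial F) (RatFunc F) (X - C θ)) ^ n ≠ 0 := by
    apply pow_ne_zero
    simpa using (RatFunc.algebraMap_ne_zero (X_sub_C_ne_zero θ))
  have := congrArg (algebraMap (Polynomial F) (RatFunc F)) heq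
  rw [map_sub, map_add, map_mul, map_pow] at this
  rw [this, sub_div, add_div, mul_div_assoc, div_self hD, mul_one]
end

section
/- Let A = F_q[t], θ = κ(t) transcendental over F_q, F a field containing F_q(θ), and n a positive integer that is a power of the characteristic p. Suppose F contains an element η with η^{q−1} = (−1/θ)^n. Then the extension class ι(η^q) ∈ Ext^1 = F[t,(t−θ)^{-1}]/(id − τ_M)(F[t]) for the A-motive A(−n) = (F[t], (t−θ)^n·1) is nonzero and is killed by t^n: namely −t^n·η^q = η − (t−θ)^n η^q lies in (id − τ_M)(F[t]), while there is no polynomial p(t) ∈ F[t] with η^q = p(t) − (t−θ)^n p(t)^{(1)}. Hence Ext^1_{M_F}(𝟙, A(−n)) has nonzero t^n-torsion. -/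
/-!
STATEMENT 19: For `A = F_q[t]`, `n` a power of the characteristic `p`, `θ ∈ F` transcendental
over `F_q`, and `η ∈ F` with `η^{q-1} = (-1/θ)^n`, the class `ι(η^q)` in
`Ext¹ = F[t, (t-θ)⁻¹]/(id - τ_M)(F[t])` for `A(-n) = (F[t], (t-θ)^n·1)` is nonzero
`t^n`-torsion: `-t^n·η^q = η - (t-θ)^n·η^q` lies in the image of `id - τ_M`, but no
`P ∈ F[t]` satisfies `η^q = P - (t-θ)^n·P^{(1)}`.
-/

theorem carlitz_negative_twist_torsion_class
    {Fq F : Type*} [Field Fq] [Fintype Fq] [Field F] [Algebra Fq F]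
    {p q e n k : ℕ} (hp : p.Prime) [CharP F p] (he : 0 < e) (hq : q = p ^ e)
    (hcard : Fintype.card Fq = q) (hn : n = p ^ k)
    (θ : F) (hθ : Transcendental Fq θ)
    {σ : F →+* F} (hσ : ∀ x, σ x = x ^ q)
    (η : F) (hη : η ^ (q - 1) = (-1 / θ) ^ n) :
    -- `-t^n · η^q = η - (t-θ)^n · η^q`, so `t^n · ι(η^q) = 0` in `Ext¹`
    (-(Polynomial.X ^ n * Polynomial.C (η ^ q)) =
        Polynomial.C η -
          (Polynomial.X - Polynomial.C θ) ^ n * Polynomial.map σ (Polynomial.C η)) ∧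
    -- but `ι(η^q) ≠ 0`: `η^q` is not of the form `P - (t-θ)^n·P^{(1)}`
    (¬ ∃ P : Polynomial F,
        Polynomial.C (η ^ q) =
          P - (Polynomial.X - Polynomial.C θ) ^ n * Polynomial.map σ P) := by
  haveI : Fact p.Prime := ⟨hp⟩
  have hθ0 : θ ≠ 0 := by
    intro h
    exact hθ (h ▸ isAlgebraic_zero)
  have hq2 : 2 ≤ q := by
    subst hq
    calc 2 ≤ p := hp.two_le
    _ = p ^ 1 := (pow_one p).symm
    _ ≤ p ^ e := Nat.pow_le_pow_right hp.pos he
  have hη0 : η ≠ 0 := by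
    intro h
    rw [h, zero_pow (by omega)] at hη
    have : ((-1 / θ : F)) ^ n ≠ 0 := pow_ne_zero _ (by
      simp [div_eq_zero_iff, hθ0])
    exact this hη.symm
  have hηq0 : η ^ q ≠ 0 := pow_ne_zero _ hη0
  have hn0 : 0 < n := hn ▸ pow_pos hp.pos k
  -- key scalar identity: θ^n * η^q = -η
  have hkey : θ ^ n * η ^ q = -η := by
    have hqsplit : η ^ q = η * η ^ (q - 1) := by
      rw [← pow_succ']
      congr 1
      omega
    have hneg : ((-1 : F) / θ) ^ n = (-1 : F) ^ n * (θ ^ n)⁻¹ := by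
      rw [div_pow, div_eq_mul_inv]
    have hm1 : ((-1 : F)) ^ n = -1 := hn ▸ neg_one_pow_char_pow F p k
    rw [hqsplit, hη, hneg, hm1]
    field_simp
  constructor
  · -- the torsion identity
    rw [Polynomial.map_C, hσ]
    have hfrob : (Polynomial.X - Polynomial.C θ) ^ n
        = Polynomial.X ^ n - (Polynomial.C θ) ^ n := by
      rw [hn]; exact sub_pow_char_pow _ _ k
    rw [hfrob, ← Polynomial.C_pow]
    have : (Polynomial.C (θ ^ n)) * Polynomial.C (η ^ q) = Polynomial.C (-η) := by
      rw [← Polynomial.C_mul, hkey]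
    have h2 : Polynomial.C η + Polynomial.C (θ ^ n) * Polynomial.C (η ^ q) = 0 := by
      rw [this, ← Polynomial.C_add, add_neg_cancel, Polynomial.C_0]
    linear_combination -h2
  · -- nonvanishing: degree argument
    rintro ⟨P, hP⟩
    by_cases hP0 : P = 0
    · rw [hP0, Polynomial.map_zero, mul_zero, sub_zero] at hP
      rw [Polynomial.C_eq_zero] at hP
      exact hηq0 hP
    · have hσinj : Function.Injective σ := σ.injective
      have hmap0 : Polynomial.map σ P ≠ 0 := by
        simpa [Polynomial.map_eq_zero_iff hσinj] using hP0
      have hdegmap : (Polynomial.map σ P).natDegree = P.natDegree :=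
        Polynomial.natDegree_map_eq_of_injective hσinj P
      have hdegpow : ((Polynomial.X - Polynomial.C θ) ^ n).natDegree = n := by
        rw [Polynomial.natDegree_pow, Polynomial.natDegree_X_sub_C, mul_one]
      have hdegmul : ((Polynomial.X - Polynomial.C θ) ^ n *
          Polynomial.map σ P).natDegree = n + P.natDegree := by
        rw [Polynomial.natDegree_mul (pow_ne_zero _ (Polynomial.X_sub_C_ne_zero θ)) hmap0,
          hdegpow, hdegmap]
      have hlt : P.natDegree < ((Polynomial.X - Polynomial.C θ) ^ n *
          Polynomial.map σ P).natDegree := by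
        rw [hdegmul]; omega
      have hdegsub := Polynomial.natDegree_sub_eq_right_of_natDegree_lt hlt
      rw [← hP, Polynomial.natDegree_C, hdegmul] at hdegsub
      omega
end
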